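/- arXiv:2012.15141 — 2 statements merged into one kernel-verified Lean document; each statement's English description precedes it below -/
import Mathlib

section
/- A flow φ on a connected graph Γ is acyclic if and only if there exist positive integers h_e for each edge e such that Σ_{e∈γ} φ(e)·h_e = 0 for every oriented cycle γ of Γ. -/
/-! A common framework for weighted multigraphs, divisors, flows,
subdivisions, pseudo-divisors and specializations, following
"The moduli space of quasistable spin curves". -/

noncomputable section

/-- A finite weighted multigraph (with a reference orientation of each edge). -/
structure WGraph where
  V : Type
  E : Type
  [fintV : Fintype V]
  [decV : DecidableEq V]
  [fintE : Fintype E]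
  [decE : DecidableEq E]
  src : E → V
  tgt : E → V
  w : V → ℕ

namespace WGraph

attribute [instance] WGraph.fintV WGraph.decV WGraph.fintE WGraph.decE

attribute [local instance] Classical.propDecidable

variable (G : WGraph)

/-- Degree of a vertex (loops count twice). -/
def deg (v : G.V) : ℕ :=
  (Finset.univ.filter (fun e => G.src e = v)).card +
    (Finset.univ.filter (fun e => G.tgt e = v)).card

/-- Degree of a vertex in the edge set `A` (loops count twice). -/
def degIn (A : Finset G.E) (v : G.V) : ℕ :=
  (A.filter (fun e => G.src e = v)).card + (A.filter (fun e => G.tgt e = v)).card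

/-- Canonical divisor: `K(v) = 2 w(v) - 2 + deg(v)`. -/
def K (v : G.V) : ℤ := 2 * (G.w v : ℤ) - 2 + (G.deg v : ℤ)

/-- Canonical polarization of degree `g - 1`. -/
def canPol (v : G.V) : ℚ := (G.K v : ℚ) / 2

/-- Oriented edges: `(e, true)` is `src → tgt`, `(e, false)` is the reverse. -/
abbrev OEdge := G.E × Bool

def osrc (oe : G.OEdge) : G.V := if oe.2 then G.src oe.1 else G.tgt oe.1

def otgt (oe : G.OEdge) : G.V := if oe.2 then G.tgt oe.1 else G.src oe.1

/-- A flow is recorded by its values along the reference orientation;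
`flowVal` gives its value on an oriented edge. -/
def flowVal (φ : G.E → ℤ) (oe : G.OEdge) : ℤ := if oe.2 then φ oe.1 else -φ oe.1

/-- The divisor of a flow: `Div(φ)(v) = ∑_{t(e) = v} φ(e)` over oriented edges. -/
def divOf (φ : G.E → ℤ) (v : G.V) : ℤ :=
  (∑ e : G.E, if G.tgt e = v then φ e else 0) -
    ∑ e : G.E, if G.src e = v then φ e else 0

/-- `e` has exactly one endpoint in `W`. -/
def crossing (W : Finset G.V) (e : G.E) : Prop := (G.src e ∈ W) ≠ (G.tgt e ∈ W)

/-- Number of edges between `W` and its complement. -/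
def delta (W : Finset G.V) : ℕ := (Finset.univ.filter (fun e => G.crossing W e)).card

/-- `β_D(W) = deg(D|_W) - μ(W) + δ_W / 2`. -/
def beta (μ : G.V → ℚ) (D : G.V → ℤ) (W : Finset G.V) : ℚ :=
  (∑ v ∈ W, (D v : ℚ)) - (∑ v ∈ W, μ v) + (G.delta W : ℚ) / 2

def Semistable (μ : G.V → ℚ) (D : G.V → ℤ) : Prop :=
  ∀ W : Finset G.V, W ≠ Finset.univ → 0 ≤ G.beta μ D W

def Stable (μ : G.V → ℚ) (D : G.V → ℤ) : Prop :=
  ∀ W : Finset G.V, W ≠ Finset.univ → W.Nonempty → 0 < G.beta μ D W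

def Quasistable (μ : G.V → ℚ) (v₀ : G.V) (D : G.V → ℤ) : Prop :=
  ∀ W : Finset G.V, W ≠ Finset.univ →
    (0 ≤ G.beta μ D W ∧ (v₀ ∈ W → 0 < G.beta μ D W))

/-- An oriented cycle: a nonempty cyclically closed chain of oriented edges,
with pairwise distinct underlying edges and pairwise distinct vertices. -/
def IsOrientedCycle (c : List G.OEdge) : Prop :=
  c ≠ [] ∧ (c.map Prod.fst).Nodup ∧ (c.map G.osrc).Nodup ∧
    ∀ i : Fin c.length,
      G.otgt (c.get i) = G.osrc (c.get ⟨((i : ℕ) + 1) % c.length, Nat.mod_lt _ i.pos⟩)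

/-- A flow is acyclic if there is no oriented cycle on which it is
nonnegative and somewhere positive. -/
def Acyclic (φ : G.E → ℤ) : Prop :=
  ¬∃ c : List G.OEdge, G.IsOrientedCycle c ∧ (∀ oe ∈ c, 0 ≤ G.flowVal φ oe) ∧
      ∃ oe ∈ c, 0 < G.flowVal φ oe

/-- Adjacency through an edge of `A`. -/
def adjVia (A : Finset G.E) (a b : G.V) : Prop :=
  ∃ e ∈ A, (G.src e = a ∧ G.tgt e = b) ∨ (G.src e = b ∧ G.tgt e = a)

/-- Reachability using only edges of `A`. -/
def ReachVia (A : Finset G.E) : G.V → G.V → Prop := Relation.ReflTransGen (G.adjVia A)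

def Connected : Prop := Nonempty G.V ∧ ∀ u v : G.V, G.ReachVia Finset.univ u v

/-- A cyclic subgraph: a set of edges in which every vertex has even degree. -/
def IsCyclicSubgraph (P : Finset G.E) : Prop := ∀ v : G.V, Even (G.degIn P v)

/-- The characteristic flow of a vertex. -/
def charFlow (v₀ : G.V) (e : G.E) : ℤ :=
  if G.src e = v₀ ∧ G.tgt e ≠ v₀ then 1
  else if G.tgt e = v₀ ∧ G.src e ≠ v₀ then -1 else 0

/-- `Div(v₀)`, the principal divisor attached to a vertex. -/
def DivV (v₀ : G.V) : G.V → ℤ := G.divOf (G.charFlow v₀)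

/-- Principal divisors are integer combinations of the `Div(v)`. -/
def Principal (D : G.V → ℤ) : Prop :=
  ∃ a : G.V → ℤ, ∀ v, D v = ∑ u : G.V, a u * G.DivV u v

/-- Number of connected components of the subgraph with all vertices and
edge set `A`. -/
def numComponents (A : Finset G.E) : ℕ :=
  (Finset.univ.image (fun v => Finset.univ.filter (fun u => G.ReachVia A v u))).card

/-- The subdivision `Γ^S`: one exceptional vertex inserted in each edge of `S`. -/
def subdiv (S : Finset G.E) : WGraph where
  V := G.V ⊕ {e // e ∈ S}
  E := {e // e ∉ S} ⊕ {e // e ∈ S} × Bool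
  src := fun x =>
    match x with
    | .inl e => .inl (G.src e.1)
    | .inr (e, b) => if b then .inr e else .inl (G.src e.1)
  tgt := fun x =>
    match x with
    | .inl e => .inl (G.tgt e.1)
    | .inr (e, b) => if b then .inl (G.tgt e.1) else .inr e
  w := fun v =>
    match v with
    | .inl v => G.w v
    | .inr _ => 0

/-- A pseudo-divisor: value `-1` on every exceptional vertex. -/
def IsPseudoDivisor (S : Finset G.E) (D : (G.subdiv S).V → ℤ) : Prop :=
  ∀ x : {e // e ∈ S}, D (Sum.inr x) = -1

/-- A pseudo-root: `2 D + Div(φ) = K_{Γ^S}` for some acyclic flow `φ` on `Γ^S`. -/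
def IsPseudoRoot (S : Finset G.E) (D : (G.subdiv S).V → ℤ) : Prop :=
  G.IsPseudoDivisor S D ∧
    ∃ φ : (G.subdiv S).E → ℤ, (G.subdiv S).Acyclic φ ∧
      ∀ v, 2 * D v + (G.subdiv S).divOf φ v = (G.subdiv S).K v

/-- Semistability of a pseudo-divisor: semistability on the subdivision with
respect to the (extended) canonical polarization. -/
def IsSemistablePR (S : Finset G.E) (D : (G.subdiv S).V → ℤ) : Prop :=
  (G.subdiv S).Semistable (G.subdiv S).canPol D

/-- `β_{E,D}` for pseudo-divisors, on subsets of the original vertices. -/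
def betaPoly (S : Finset G.E) (D : (G.subdiv S).V → ℤ) (W : Finset G.V) : ℚ :=
  (∑ v ∈ W, (D (Sum.inl v) : ℚ)) -
    (∑ v ∈ W, (G.canPol v + (G.degIn S v : ℚ) / 2)) +
    ((Finset.univ.filter (fun e => e ∉ S ∧ G.crossing W e)).card : ℚ) / 2

/-- Polystability of a pseudo-divisor. -/
def IsPolystable (S : Finset G.E) (D : (G.subdiv S).V → ℤ) : Prop :=
  ∀ W : Finset G.V,
    0 ≤ G.betaPoly S D W ∧ ((∃ e, e ∉ S ∧ G.crossing W e) → 0 < G.betaPoly S D W)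

/-- The divisor `D_P` attached to a cyclic subgraph `P`, on `Γ^{E_P}` with
`E_P = Pᶜ`. -/
def DP (P : Finset G.E) : (G.subdiv Pᶜ).V → ℤ := fun x =>
  match x with
  | .inl v => (G.deg v : ℤ) - (G.degIn P v : ℤ) / 2 - 1 + (G.w v : ℤ)
  | .inr _ => -1

/-- The data of a semistable root-graph together with its acyclic flow. -/
def IsSemistableRootTriple (S : Finset G.E) (D : (G.subdiv S).V → ℤ)
    (φ : (G.subdiv S).E → ℤ) : Prop :=
  G.IsPseudoDivisor S D ∧ G.IsSemistablePR S D ∧ (G.subdiv S).Acyclic φ ∧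
    ∀ v, 2 * D v + (G.subdiv S).divOf φ v = (G.subdiv S).K v

/-- The induced subgraph on a vertex set `W`. -/
def induce (W : Finset G.V) : WGraph where
  V := {v // v ∈ W}
  E := {e // G.src e ∈ W ∧ G.tgt e ∈ W}
  src := fun e => ⟨G.src e.1, e.2.1⟩
  tgt := fun e => ⟨G.tgt e.1, e.2.2⟩
  w := fun v => G.w v.1

/-- Number of edges between `W` and `Wᶜ` incident to `v`. -/
def degCross (W : Finset G.V) (v : G.V) : ℕ :=
  (Finset.univ.filter (fun e => G.src e = v ∧ G.crossing W e)).card +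
    (Finset.univ.filter (fun e => G.tgt e = v ∧ G.crossing W e)).card

/-- A specialization (iterated edge contraction) of weighted graphs. -/
structure Spec (G G' : WGraph) where
  vmap : G.V → G'.V
  emap : G'.E → G.E
  emap_inj : Function.Injective emap
  vmap_surj : Function.Surjective vmap
  src_comm : ∀ e', vmap (G.src (emap e')) = G'.src e'
  tgt_comm : ∀ e', vmap (G.tgt (emap e')) = G'.tgt e'
  contract_eq : ∀ e : G.E, e ∉ Finset.univ.image emap → vmap (G.src e) = vmap (G.tgt e)
  fiber_conn : ∀ u v : G.V, vmap u = vmap v →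
    Relation.ReflTransGen
      (fun a b => ∃ e, e ∉ Finset.univ.image emap ∧
        ((G.src e = a ∧ G.tgt e = b) ∨ (G.src e = b ∧ G.tgt e = a))) u v
  weight_eq : ∀ v' : G'.V,
    (G'.w v' : ℤ) =
      (∑ v ∈ Finset.univ.filter (fun v => vmap v = v'), (G.w v : ℤ)) +
        ((Finset.univ.filter (fun e : G.E =>
            e ∉ Finset.univ.image emap ∧ vmap (G.src e) = v')).card : ℤ) -
        ((Finset.univ.filter (fun v : G.V => vmap v = v')).card : ℤ) + 1

/-- Pushforward of a divisor along a specialization. -/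
def Spec.pushDiv {G G' : WGraph} (σ : Spec G G') (D : G.V → ℤ) : G'.V → ℤ :=
  fun v' => ∑ v ∈ Finset.univ.filter (fun v => σ.vmap v = v'), D v

/-- Pushforward of a polarization along a specialization. -/
def Spec.pushPol {G G' : WGraph} (σ : Spec G G') (μ : G.V → ℚ) : G'.V → ℚ :=
  fun v' => ∑ v ∈ Finset.univ.filter (fun v => σ.vmap v = v'), μ v

/-- The induced map on vertices of subdivisions. -/
def Spec.subdivVmap {G G' : WGraph} (σ : Spec G G') (S : Finset G.E)
    (S' : Finset G'.E) : (G.subdiv S).V → (G'.subdiv S').V := fun x =>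
  match x with
  | .inl v => .inl (σ.vmap v)
  | .inr e =>
    if h : ∃ e' : {e' // e' ∈ S'}, σ.emap e'.1 = e.1 then .inr h.choose
    else .inl (σ.vmap (G.src e.1))

/-- Pushforward of a pseudo-divisor (its divisor part) along a specialization. -/
def Spec.pushSubdivDiv {G G' : WGraph} (σ : Spec G G') (S : Finset G.E)
    (S' : Finset G'.E) (D : (G.subdiv S).V → ℤ) : (G'.subdiv S').V → ℤ := fun y =>
  ∑ x ∈ Finset.univ.filter (fun x => σ.subdivVmap S S' x = y), D x

/-- Extension by zero along the edge injection of a specialization. -/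
def Spec.extendBy {G G' : WGraph} (σ : Spec G G') (x : G'.E → ℝ) : G.E → ℝ :=
  fun e => if h : ∃ e', σ.emap e' = e then x h.choose else 0

/-- Same-graph contraction of subdivisions (for `S ⊆ S'`): the vertex map.
`σb e` selects the endpoint to which the exceptional vertex of a contracted
edge `e ∈ S' \ S` is merged (`true` = target, `false` = source). -/
def contrVmap (S S' : Finset G.E) (σb : G.E → Bool) :
    (G.subdiv S').V → (G.subdiv S).V := fun x =>
  match x with
  | .inl v => .inl v
  | .inr e =>
    if h : e.1 ∈ S then .inr ⟨e.1, h⟩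
    else .inl (if σb e.1 then G.tgt e.1 else G.src e.1)

/-- Same-graph contraction of subdivisions: the edge injection. -/
def contrEmap (S S' : Finset G.E) (hSS : S ⊆ S') (σb : G.E → Bool) :
    (G.subdiv S).E → (G.subdiv S').E := fun x =>
  match x with
  | .inl e =>
    if h : e.1 ∈ S' then .inr (⟨e.1, h⟩, !σb e.1) else .inl ⟨e.1, h⟩
  | .inr eb => .inr (⟨eb.1.1, hSS eb.1.2⟩, eb.2)

/-- Specialization of pseudo-divisors over a fixed graph. -/
def PDSpec (S' : Finset G.E) (D' : (G.subdiv S').V → ℤ) (S : Finset G.E)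
    (D : (G.subdiv S).V → ℤ) : Prop :=
  S ⊆ S' ∧ ∃ σb : G.E → Bool,
    ∀ v, D v = ∑ x ∈ Finset.univ.filter (fun x => G.contrVmap S S' σb x = v), D' x

/-- Specialization of semistable root-graphs over a fixed graph: a
specialization of pseudo-divisors pushing the acyclic flow forward. -/
def RootSpec (S' : Finset G.E) (D' : (G.subdiv S').V → ℤ) (S : Finset G.E)
    (D : (G.subdiv S).V → ℤ) : Prop :=
  ∃ hSS : S ⊆ S', ∃ σb : G.E → Bool,
    (∀ v, D v = ∑ x ∈ Finset.univ.filter (fun x => G.contrVmap S S' σb x = v), D' x) ∧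
    ∀ φ' φ : _, (G.subdiv S').Acyclic φ' →
      (∀ v, 2 * D' v + (G.subdiv S').divOf φ' v = (G.subdiv S').K v) →
      (G.subdiv S).Acyclic φ →
      (∀ v, 2 * D v + (G.subdiv S).divOf φ v = (G.subdiv S).K v) →
      ∀ x, φ x = φ' (G.contrEmap S S' hSS σb x)

/-- Underlying edge of `Γ` of an edge of `Γ^S`. -/
def underE (S : Finset G.E) : (G.subdiv S).E → G.E := fun x =>
  match x with
  | .inl e => e.1
  | .inr eb => eb.1.1

/-- A specialization of triples `(Γ, E, D) ≥ (Γ', E', D')`. -/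
structure TripleSpec (G : WGraph) (S : Finset G.E) (D : (G.subdiv S).V → ℤ)
    (G' : WGraph) (S' : Finset G'.E) (D' : (G'.subdiv S').V → ℤ) where
  base : Spec G G'
  sub : Spec (G.subdiv S) (G'.subdiv S')
  vcomm : ∀ v : G.V, sub.vmap (Sum.inl v) = Sum.inl (base.vmap v)
  ecomm : ∀ x : (G'.subdiv S').E, G.underE S (sub.emap x) = base.emap (G'.underE S' x)
  edges_sub : ∀ e' ∈ S', base.emap e' ∈ S
  push_eq : ∀ y, D' y = ∑ x ∈ Finset.univ.filter (fun x => sub.vmap x = y), D x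

/-- A triple specialization is a specialization of root-graphs when it pushes
the (unique) acyclic flows forward. -/
def TripleSpec.IsRootSpec {G : WGraph} {S : Finset G.E} {D : (G.subdiv S).V → ℤ}
    {G' : WGraph} {S' : Finset G'.E} {D' : (G'.subdiv S').V → ℤ}
    (T : TripleSpec G S D G' S' D') : Prop :=
  ∀ φ φ', (G.subdiv S).Acyclic φ →
    (∀ v, 2 * D v + (G.subdiv S).divOf φ v = (G.subdiv S).K v) →
    (G'.subdiv S').Acyclic φ' →
    (∀ v, 2 * D' v + (G'.subdiv S').divOf φ' v = (G'.subdiv S').K v) →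
    ∀ x, φ' x = φ (T.sub.emap x)

/-- The cone `λ` attached to a flow: nonnegative orthant cut by the cycle
equations. -/
def lambdaSet (φ : G.E → ℤ) : Set (G.E → ℝ) :=
  {x | (∀ e, 0 ≤ x e) ∧ ∀ c : List G.OEdge, G.IsOrientedCycle c →
      ((c.map (fun oe => (G.flowVal φ oe : ℝ) * x oe.1)).sum) = 0}

/-- Its relative interior (intersection with the positive orthant). -/
def lambdaInt (φ : G.E → ℤ) : Set (G.E → ℝ) :=
  {x | (∀ e, 0 < x e) ∧ ∀ c : List G.OEdge, G.IsOrientedCycle c →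
      ((c.map (fun oe => (G.flowVal φ oe : ℝ) * x oe.1)).sum) = 0}

/-- Faces of a cone (supporting-hyperplane definition). -/
def IsFaceOf (F C : Set (G.E → ℝ)) : Prop :=
  F = C ∨ ∃ l : (G.E → ℝ) →ₗ[ℝ] ℝ, (∀ x ∈ C, 0 ≤ l x) ∧ F = C ∩ {x | l x = 0}

/-- Facets: faces of codimension one. -/
def IsFacetOf (F C : Set (G.E → ℝ)) : Prop :=
  G.IsFaceOf F C ∧
    Module.finrank ℝ (Submodule.span ℝ F) + 1 = Module.finrank ℝ (Submodule.span ℝ C)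

/-- The vector `u_V` spanning the subspace `L_E`. -/
def uVec (S : Finset G.E) (W : Finset G.V) : (G.subdiv S).E → ℝ := fun x =>
  match x with
  | .inl _ => 0
  | .inr eb =>
    if G.crossing W eb.1.1 then
      (if (if eb.2 then G.tgt eb.1.1 else G.src eb.1.1) ∈ W then 1 else -1)
    else 0

/-- The subspace `L_E ⊆ ℝ^{E(Γ^S)}`. -/
def LSub (S : Finset G.E) : Submodule ℝ ((G.subdiv S).E → ℝ) :=
  Submodule.span ℝ {u | ∃ W : Finset G.V, (∀ e, G.crossing W e → e ∈ S) ∧ u = G.uVec S W}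

/-- The diagonal map `δ_E : ℝ^{E(Γ)} → ℝ^{E(Γ^S)}`. -/
def deltaMap (S : Finset G.E) (x : G.E → ℝ) : (G.subdiv S).E → ℝ := fun e' =>
  match e' with
  | .inl e => x e.1
  | .inr eb => x eb.1.1

/-- One step of a `φ`-path avoiding the edges of `A`. -/
def phiStep (φ : G.E → ℤ) (A : Finset G.E) (a b : G.V) : Prop :=
  ∃ oe : G.OEdge, oe.1 ∉ A ∧ 0 ≤ G.flowVal φ oe ∧ G.osrc oe = a ∧ G.otgt oe = b

/-- Reachability by `φ`-paths avoiding the edges of `A`. -/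
def PhiReach (φ : G.E → ℤ) (A : Finset G.E) : G.V → G.V → Prop :=
  Relation.ReflTransGen (G.phiStep φ A)

/-- The refinement of `Γ` inserting `m e` vertices in the interior of each
edge `e`. -/
def refine (m : G.E → ℕ) : WGraph where
  V := G.V ⊕ (Σ e : G.E, Fin (m e))
  E := Σ e : G.E, Fin (m e + 1)
  src := fun x =>
    if h : (x.2 : ℕ) = 0 then .inl (G.src x.1)
    else .inr ⟨x.1, ⟨(x.2 : ℕ) - 1, by have := x.2.isLt; omega⟩⟩
  tgt := fun x =>
    if h : (x.2 : ℕ) = m x.1 then .inl (G.tgt x.1)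
    else .inr ⟨x.1, ⟨(x.2 : ℕ), by have := x.2.isLt; omega⟩⟩
  w := fun v =>
    match v with
    | .inl v => G.w v
    | .inr _ => 0

end WGraph

attribute [local instance] Classical.propDecidable

section Stmt5A

lemma getc {α : Type _} (c : List α) {i j : ℕ} (h : i = j) (hi : i < c.length)
    (hj : j < c.length) : c.get ⟨i, hi⟩ = c.get ⟨j, hj⟩ := by subst h; rfl

lemma takeGet {α : Type _} (c : List α) (j k : ℕ) (hk : k < (c.take j).length) :
    (c.take j).get ⟨k, hk⟩ = c.get ⟨k, by simp at hk; omega⟩ := by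
  simp [List.get_eq_getElem, List.getElem_take]

lemma dropGet {α : Type _} (c : List α) (j k : ℕ) (hk : k < (c.drop j).length) :
    (c.drop j).get ⟨k, hk⟩ = c.get ⟨j + k, by simp at hk; omega⟩ := by
  simp [List.get_eq_getElem, List.getElem_drop]

lemma rotGet {α : Type _} (c : List α) (n k : ℕ) (hk : k < (c.rotate n).length) :
    (c.rotate n).get ⟨k, hk⟩ = c.get ⟨(k + n) % c.length,
      Nat.mod_lt _ (by simp at hk; omega)⟩ := by
  simp [List.get_eq_getElem, List.getElem_rotate]

variable (G : WGraph) (φ : G.E → ℤ)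

/-- A closed walk: nonempty, cyclically chained (no injectivity required). -/
def CWalk (c : List G.OEdge) : Prop :=
  c ≠ [] ∧ ∀ i : Fin c.length,
    G.otgt (c.get i) = G.osrc (c.get ⟨((i : ℕ) + 1) % c.length, Nat.mod_lt _ i.pos⟩)

lemma cwalk_idx {c : List G.OEdge} (hc : CWalk G c) (k : ℕ) (hk : k < c.length) :
    G.otgt (c.get ⟨k, hk⟩) =
      G.osrc (c.get ⟨(k + 1) % c.length, Nat.mod_lt _ (by omega)⟩) :=
  hc.2 ⟨k, hk⟩

lemma cwalk_of_chain {c : List G.OEdge} (hne : c ≠ [])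
    (hch : List.Chain' (fun a b => G.otgt a = G.osrc b) c)
    (hwrap : G.otgt (c.getLast hne) = G.osrc (c.head hne)) : CWalk G c := by
  refine ⟨hne, fun i => ?_⟩
  obtain ⟨k, hk⟩ := i
  rcases Nat.lt_or_ge (k + 1) c.length with h | h
  · have key := List.isChain_iff_getElem.mp hch k (by omega)
    have hmod : (k + 1) % c.length = k + 1 := Nat.mod_eq_of_lt h
    rw [getc c hmod _ (by omega)]
    exact key
  · have hlen : k + 1 = c.length := by omega
    have hmod : (k + 1) % c.length = 0 := by rw [hlen, Nat.mod_self]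
    have h1 : c.getLast hne = c.get ⟨c.length - 1, by omega⟩ :=
      List.getLast_eq_getElem hne
    have h2 : c.head hne = c.get ⟨0, by omega⟩ := by
      cases c with
      | nil => exact absurd rfl hne
      | cons a l => rfl
    rw [h1, h2] at hwrap
    rw [getc c hmod _ (by omega), getc c (show k = c.length - 1 by omega) _ (by omega)]
    exact hwrap

lemma cwalk_rotate {c : List G.OEdge} (hc : CWalk G c) (n : ℕ) :
    CWalk G (c.rotate n) := by
  obtain ⟨hne, hch⟩ := hc
  have hpos : 0 < c.length := List.length_pos_iff.mpr hne
  refine ⟨by simp [List.rotate_eq_nil_iff]; exact hne, fun i => ?_⟩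
  obtain ⟨k, hk⟩ := i
  have hk' : k < c.length := by rwa [List.length_rotate] at hk
  rw [rotGet, rotGet]
  rw [getc c (show ((k + 1) % (c.rotate n).length + n) % c.length
        = ((k + n) % c.length + 1) % c.length by
      rw [List.length_rotate, Nat.mod_add_mod, Nat.mod_add_mod]
      congr 1; omega) _ (Nat.mod_lt _ hpos)]
  exact cwalk_idx G ⟨hne, hch⟩ _ (Nat.mod_lt _ hpos)

lemma cwalk_take {c : List G.OEdge} (hc : CWalk G c) {j : ℕ} (h0 : 0 < j)
    (hj : j < c.length)
    (hdup : G.osrc (c.get ⟨0, by omega⟩) = G.osrc (c.get ⟨j, hj⟩)) :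
    CWalk G (c.take j) := by
  have hlt : (c.take j).length = j := by rw [List.length_take]; omega
  refine ⟨by intro h; rw [h] at hlt; simp at hlt; omega, fun i => ?_⟩
  obtain ⟨k, hk⟩ := i
  have hk' : k < j := by omega
  rw [takeGet, takeGet]
  rcases Nat.lt_or_ge (k + 1) j with h | h
  · rw [getc c (show (k + 1) % (c.take j).length = k + 1 by
        rw [hlt]; exact Nat.mod_eq_of_lt h) _ (by omega)]
    have key := cwalk_idx G hc k (by omega)
    rw [getc c (show (k + 1) % c.length = k + 1 from
        Nat.mod_eq_of_lt (by omega)) _ (by omega)] at key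
    exact key
  · rw [getc c (show (k + 1) % (c.take j).length = 0 by
        rw [hlt, show k + 1 = j by omega, Nat.mod_self]) _ (by omega)]
    have key := cwalk_idx G hc k (by omega)
    rw [getc c (show (k + 1) % c.length = j by
        rw [show k + 1 = j by omega]; exact Nat.mod_eq_of_lt hj) _ hj] at key
    rw [← hdup] at key
    exact key

lemma cwalk_drop {c : List G.OEdge} (hc : CWalk G c) {j : ℕ} (h0 : 0 < j)
    (hj : j < c.length)
    (hdup : G.osrc (c.get ⟨0, by omega⟩) = G.osrc (c.get ⟨j, hj⟩)) :
    CWalk G (c.drop j) := by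
  have hlt : (c.drop j).length = c.length - j := List.length_drop
  refine ⟨by intro h; rw [h] at hlt; simp at hlt; omega, fun i => ?_⟩
  obtain ⟨k, hk⟩ := i
  have hk' : k < c.length - j := by omega
  rw [dropGet, dropGet]
  rcases Nat.lt_or_ge (k + 1) (c.length - j) with h | h
  · rw [getc c (show j + (k + 1) % (c.drop j).length = j + k + 1 by
        rw [hlt, Nat.mod_eq_of_lt h]; omega) _ (by omega)]
    have key := cwalk_idx G hc (j + k) (by omega)
    rw [getc c (show (j + k + 1) % c.length = j + k + 1 from
        Nat.mod_eq_of_lt (by omega)) _ (by omega)] at key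
    exact key
  · rw [getc c (show j + (k + 1) % (c.drop j).length = j by
        rw [hlt, show k + 1 = c.length - j by omega, Nat.mod_self]
        omega) _ hj]
    rw [← hdup]
    have key := cwalk_idx G hc (j + k) (by omega)
    rw [getc c (show (j + k + 1) % c.length = 0 by
        rw [show j + k + 1 = c.length by omega, Nat.mod_self]) _ (by omega)] at key
    exact key

lemma exists_dup {α : Type _} {l : List α} (h : ¬ l.Nodup) :
    ∃ i j : Fin l.length, l.get i = l.get j ∧ i ≠ j := by
  by_contra hcon
  push_neg at hcon
  exact h (List.nodup_iff_injective_get.mpr fun a b hab => hcon a b hab)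

lemma osrc_flip (e : G.E) (b : Bool) : G.osrc (e, !b) = G.otgt (e, b) := by
  cases b <;> simp [WGraph.osrc, WGraph.otgt]

lemma otgt_flip (e : G.E) (b : Bool) : G.otgt (e, !b) = G.osrc (e, b) := by
  cases b <;> simp [WGraph.osrc, WGraph.otgt]

lemma list_sum_pos : ∀ l : List ℤ, (∀ x ∈ l, 0 ≤ x) → (∃ x ∈ l, 0 < x) → 0 < l.sum := by
  intro l
  induction l with
  | nil => rintro _ ⟨x, hx, _⟩; simp at hx
  | cons a t iht =>
    rintro hnn ⟨x, hx, hxpos⟩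
    rw [List.sum_cons]
    rcases List.mem_cons.mp hx with rfl | hxt
    · have : 0 ≤ t.sum := List.sum_nonneg fun y hy => hnn y (List.mem_cons_of_mem _ hy)
      linarith
    · have h1 : 0 ≤ a := hnn a (by simp)
      have h2 : 0 < t.sum := iht (fun y hy => hnn y (List.mem_cons_of_mem _ hy)) ⟨x, hxt, hxpos⟩
      linarith

lemma extract_cycle : ∀ (n : ℕ) (c : List G.OEdge), c.length = n → CWalk G c →
    (∀ oe ∈ c, 0 ≤ G.flowVal φ oe) → (∃ oe ∈ c, 0 < G.flowVal φ oe) →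
    ∃ c', G.IsOrientedCycle c' ∧ (∀ oe ∈ c', 0 ≤ G.flowVal φ oe) ∧
      ∃ oe ∈ c', 0 < G.flowVal φ oe := by
  intro n
  induction n using Nat.strong_induction_on with
  | _ n ihn =>
    intro c hlen hc hnn hpos
    by_cases hs : (c.map G.osrc).Nodup
    · by_cases he : (c.map Prod.fst).Nodup
      · exact ⟨c, ⟨hc.1, he, hs, hc.2⟩, hnn, hpos⟩
      · exfalso
        obtain ⟨i, j, hget, hij⟩ := exists_dup he
        have hinj : ∀ a b : Fin c.length, G.osrc (c.get a) = G.osrc (c.get b) → a = b := by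
          have hI := List.nodup_iff_injective_get.mp hs
          intro a b hab
          have ha : (a : ℕ) < (c.map G.osrc).length := by simpa using a.2
          have hb : (b : ℕ) < (c.map G.osrc).length := by simpa using b.2
          have h5 : (⟨a, ha⟩ : Fin (c.map G.osrc).length) = ⟨b, hb⟩ :=
            hI (by simpa [List.get_eq_getElem, List.getElem_map] using hab)
          have h6 := congrArg Fin.val h5
          exact Fin.ext h6
        have hi' : (i : ℕ) < c.length := by simpa using i.2
        have hj' : (j : ℕ) < c.length := by simpa using j.2
        rcases hgi : c.get ⟨i, hi'⟩ with ⟨e0, b0⟩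
        rcases hgj : c.get ⟨j, hj'⟩ with ⟨e1, b1⟩
        have hfst : (c.get ⟨(i : ℕ), hi'⟩).1 = (c.get ⟨(j : ℕ), hj'⟩).1 := by
          simpa [List.get_eq_getElem, List.getElem_map] using hget
        rw [hgi, hgj] at hfst
        cases hfst
        have hbne : b0 ≠ b1 := by
          intro hbb
          subst hbb
          have hgg : c.get ⟨(i : ℕ), hi'⟩ = c.get ⟨(j : ℕ), hj'⟩ := by rw [hgi, hgj]
          have h5 := hinj _ _ (congrArg G.osrc hgg)
          have h6 := congrArg Fin.val h5
          exact hij (Fin.ext h6)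
        have hb1 : b1 = !b0 := by
          cases b0 <;> cases b1 <;> first | rfl | exact absurd rfl hbne
        subst hb1
        have key1 := cwalk_idx G hc (i : ℕ) hi'
        rw [hgi] at key1
        have key2 := cwalk_idx G hc (j : ℕ) hj'
        rw [hgj] at key2
        have eqj : (j : ℕ) = ((i : ℕ) + 1) % c.length := by
          have hh : G.osrc (c.get ⟨(j : ℕ), hj'⟩) =
              G.osrc (c.get ⟨((i : ℕ) + 1) % c.length, Nat.mod_lt _ (by omega)⟩) := by
            rw [hgj, osrc_flip]; exact key1
          have h5 := hinj _ _ hh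
          exact congrArg Fin.val h5
        have eqi : (i : ℕ) = ((j : ℕ) + 1) % c.length := by
          have hh : G.osrc (c.get ⟨(i : ℕ), hi'⟩) =
              G.osrc (c.get ⟨((j : ℕ) + 1) % c.length, Nat.mod_lt _ (by omega)⟩) := by
            rw [hgi, ← otgt_flip G e0 b0]; exact key2
          have h5 := hinj _ _ hh
          exact congrArg Fin.val h5
        have hne' : (i : ℕ) ≠ (j : ℕ) := by
          intro hh; exact hij (Fin.ext hh)
        have hm2 : c.length = 2 := by
          rcases Nat.lt_or_ge ((i : ℕ) + 1) c.length with ha | ha <;>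
            rcases Nat.lt_or_ge ((j : ℕ) + 1) c.length with hb2 | hb2
          · rw [Nat.mod_eq_of_lt ha] at eqj; rw [Nat.mod_eq_of_lt hb2] at eqi; omega
          · rw [Nat.mod_eq_of_lt ha] at eqj
            rw [show (j : ℕ) + 1 = c.length by omega, Nat.mod_self] at eqi; omega
          · rw [show (i : ℕ) + 1 = c.length by omega, Nat.mod_self] at eqj
            rw [Nat.mod_eq_of_lt hb2] at eqi; omega
          · omega
        obtain ⟨oe, hmem, hoe⟩ := hpos
        obtain ⟨kf, hkeq⟩ := List.mem_iff_get.mp hmem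
        have hk2 : (kf : ℕ) = (i : ℕ) ∨ (kf : ℕ) = (j : ℕ) := by
          have := kf.2; omega
        have hkio : oe = (e0, b0) ∨ oe = (e0, !b0) := by
          rcases hk2 with hk2 | hk2
          · left; rw [← hkeq, getc c hk2 _ hi', hgi]
          · right; rw [← hkeq, getc c hk2 _ hj', hgj]
        have hflip : G.flowVal φ (e0, !b0) = - G.flowVal φ (e0, b0) := by
          cases b0 <;> simp [WGraph.flowVal]
        have hni := hnn (e0, b0) (by rw [← hgi]; exact List.get_mem c _)
        have hnj := hnn (e0, !b0) (by rw [← hgj]; exact List.get_mem c _)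
        rcases hkio with rfl | rfl <;> omega
    · obtain ⟨i, j, hget, hij⟩ := exists_dup hs
      have hi' : (i : ℕ) < c.length := by simpa using i.2
      have hj' : (j : ℕ) < c.length := by simpa using j.2
      have heq : G.osrc (c.get ⟨i, hi'⟩) = G.osrc (c.get ⟨j, hj'⟩) := by
        simpa [List.get_eq_getElem, List.getElem_map] using hget
      have main : ∀ (a b : ℕ) (ha : a < c.length) (hb : b < c.length), a < b →
          G.osrc (c.get ⟨a, ha⟩) = G.osrc (c.get ⟨b, hb⟩) →
          ∃ c', G.IsOrientedCycle c' ∧ (∀ oe ∈ c', 0 ≤ G.flowVal φ oe) ∧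
            ∃ oe ∈ c', 0 < G.flowVal φ oe := by
        intro a b ha hb hab habeq
        have hc'w : CWalk G (c.rotate a) := cwalk_rotate G hc a
        have hlen' : (c.rotate a).length = c.length := List.length_rotate c a
        have hba1 : 0 < b - a := by omega
        have hba2 : b - a < (c.rotate a).length := by omega
        have h00 : (0 : ℕ) < (c.rotate a).length := by omega
        have h0 : G.osrc ((c.rotate a).get ⟨0, h00⟩) =
            G.osrc ((c.rotate a).get ⟨b - a, hba2⟩) := by
          rw [rotGet, rotGet]
          rw [getc c (show (0 + a) % c.length = a by
                rw [Nat.zero_add]; exact Nat.mod_eq_of_lt ha) _ ha,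
              getc c (show (b - a + a) % c.length = b by
                rw [Nat.sub_add_cancel (le_of_lt hab)]; exact Nat.mod_eq_of_lt hb) _ hb]
          exact habeq
        have ht := cwalk_take G hc'w hba1 hba2 h0
        have hd := cwalk_drop G hc'w hba1 hba2 h0
        obtain ⟨oe, hmem, hoe⟩ := hpos
        have hmem' : oe ∈ c.rotate a := List.mem_rotate.mpr hmem
        have hsplit := List.take_append_drop (b - a) (c.rotate a)
        rcases List.mem_append.mp (by rw [hsplit]; exact hmem') with hcase | hcase
        · refine ihn ((c.rotate a).take (b - a)).length ?_ _ rfl ht ?_ ⟨oe, hcase, hoe⟩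
          · rw [List.length_take]; omega
          · intro x hx
            exact hnn x (List.mem_rotate.mp (List.mem_of_mem_take hx))
        · refine ihn ((c.rotate a).drop (b - a)).length ?_ _ rfl hd ?_ ⟨oe, hcase, hoe⟩
          · rw [List.length_drop]; omega
          · intro x hx
            exact hnn x (List.mem_rotate.mp (List.mem_of_mem_drop hx))
      rcases Nat.lt_trichotomy (i : ℕ) (j : ℕ) with h | h | h
      · exact main _ _ hi' hj' h heq
      · exact absurd (Fin.ext h) hij
      · exact main _ _ hj' hi' h heq.symm
def FStep (a b : G.V) : Prop :=
  ∃ oe : G.OEdge, 0 ≤ G.flowVal φ oe ∧ G.osrc oe = a ∧ G.otgt oe = b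

def FReach : G.V → G.V → Prop := Relation.ReflTransGen (FStep G φ)

lemma reach_walk {a b : G.V} (h : FReach G φ a b) :
    a = b ∨ ∃ (w : List G.OEdge) (hw : w ≠ []),
      List.Chain' (fun x y => G.otgt x = G.osrc y) w ∧
      (∀ oe ∈ w, 0 ≤ G.flowVal φ oe) ∧
      G.osrc (w.head hw) = a ∧ G.otgt (w.getLast hw) = b := by
  induction h with
  | refl => exact Or.inl rfl
  | tail hab hstep ihh =>
    obtain ⟨oe, hoe, hsrc, htgt⟩ := hstep
    rcases ihh with rfl | ⟨w, hw, hch, hflow, hhead, hlast⟩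
    · refine Or.inr ⟨[oe], by simp, List.isChain_singleton oe, by simpa using hoe, ?_, ?_⟩
      · simpa using hsrc
      · simpa using htgt
    · refine Or.inr ⟨w ++ [oe], by simp, ?_, ?_, ?_, ?_⟩
      · apply List.isChain_append.mpr
        refine ⟨hch, List.isChain_singleton oe, ?_⟩
        intro x hx y hy
        simp at hy; subst hy
        rw [List.getLast?_eq_getLast hw] at hx
        simp at hx; subst hx
        rw [hlast, hsrc]
      · intro x hx
        rcases List.mem_append.mp hx with h | h
        · exact hflow x h
        · simp at h; subst h; exact hoe
      · rw [List.head_append_of_ne_nil hw]; exact hhead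
      · rw [List.getLast_concat]; exact htgt

lemma no_closed (hacyc : G.Acyclic φ) {oe : G.OEdge} (hpos : 0 < G.flowVal φ oe) :
    ¬ FReach G φ (G.otgt oe) (G.osrc oe) := by
  intro h
  apply hacyc
  rcases reach_walk G φ h with heq | ⟨w, hw, hch, hflow, hhead, hlast⟩
  · have hcw : CWalk G [oe] :=
      cwalk_of_chain G (by simp) (List.isChain_singleton oe) (by simpa using heq)
    obtain ⟨c', hcyc, h1, h2⟩ := extract_cycle G φ 1 [oe] rfl hcw
      (by simpa using le_of_lt hpos) ⟨oe, by simp, hpos⟩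
    exact ⟨c', hcyc, h1, h2⟩
  · have hne : (oe :: w) ≠ [] := by simp
    have hch2 : List.Chain' (fun x y => G.otgt x = G.osrc y) (oe :: w) := by
      refine List.isChain_cons.mpr ⟨?_, hch⟩
      intro y hy
      rw [List.head?_eq_head hw] at hy
      simp at hy; subst hy
      rw [hhead]
    have hwrap : G.otgt ((oe :: w).getLast hne) = G.osrc ((oe :: w).head hne) := by
      rw [List.getLast_cons hw]
      simpa using hlast
    have hcw := cwalk_of_chain G hne hch2 hwrap
    obtain ⟨c', hcyc, h1, h2⟩ := extract_cycle G φ (oe :: w).length _ rfl hcw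
      (by
        intro x hx
        rcases List.mem_cons.mp hx with rfl | hxw
        · exact le_of_lt hpos
        · exact hflow x hxw)
      ⟨oe, by simp, hpos⟩
    exact ⟨c', hcyc, h1, h2⟩

def RSet (v : G.V) : Finset G.V := Finset.univ.filter (fun u => FReach G φ v u)

def Psi (v : G.V) : ℤ := ((RSet G φ v).card : ℤ)

lemma rset_subset {a b : G.V} (h : FStep G φ a b) : RSet G φ b ⊆ RSet G φ a := by
  intro u hu
  simp only [RSet, Finset.mem_filter, Finset.mem_univ, true_and] at hu ⊢
  exact Relation.ReflTransGen.head h hu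

lemma psi_lt (hacyc : G.Acyclic φ) {oe : G.OEdge} (hpos : 0 < G.flowVal φ oe) :
    Psi G φ (G.otgt oe) < Psi G φ (G.osrc oe) := by
  have hsub : RSet G φ (G.otgt oe) ⊆ RSet G φ (G.osrc oe) :=
    rset_subset G φ ⟨oe, le_of_lt hpos, rfl, rfl⟩
  have hmem : G.osrc oe ∈ RSet G φ (G.osrc oe) := by
    simp only [RSet, Finset.mem_filter, Finset.mem_univ, true_and]
    exact Relation.ReflTransGen.refl
  have hnmem : G.osrc oe ∉ RSet G φ (G.otgt oe) := by
    simp only [RSet, Finset.mem_filter, Finset.mem_univ, true_and]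
    exact no_closed G φ hacyc hpos
  have hcard := Finset.card_lt_card
    ((Finset.ssubset_iff_of_subset hsub).mpr ⟨_, hmem, hnmem⟩)
  simp only [Psi]
  exact_mod_cast hcard

lemma psi_eq_of_zero (e : G.E) (h : φ e = 0) :
    Psi G φ (G.src e) = Psi G φ (G.tgt e) := by
  have h1 : FStep G φ (G.src e) (G.tgt e) :=
    ⟨(e, true), by simp [WGraph.flowVal, h], by simp [WGraph.osrc], by simp [WGraph.otgt]⟩
  have h2 : FStep G φ (G.tgt e) (G.src e) :=
    ⟨(e, false), by simp [WGraph.flowVal, h], by simp [WGraph.osrc], by simp [WGraph.otgt]⟩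
  have heq : RSet G φ (G.src e) = RSet G φ (G.tgt e) :=
    Finset.Subset.antisymm (rset_subset G φ h2) (rset_subset G φ h1)
  simp [Psi, heq]

end Stmt5A

/-- A flow `φ` on a connected graph is acyclic iff there are
positive integers `h_e` with `∑_{e ∈ γ} φ(e) h_e = 0` for every oriented
cycle `γ`. -/
theorem stmt5 (G : WGraph) (hconn : G.Connected) (φ : G.E → ℤ) :
    G.Acyclic φ ↔
      ∃ h : G.E → ℤ, (∀ e, 0 < h e) ∧
        ∀ c : List G.OEdge, G.IsOrientedCycle c →
          ((c.map (fun oe => G.flowVal φ oe * h oe.1)).sum) = 0 := by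
  constructor
  · intro hacyc
    set N : ℤ := ∏ e : G.E, max 1 |φ e| with hNdef
    have hNpos : 0 < N :=
      Finset.prod_pos fun e _ => lt_of_lt_of_le zero_lt_one (le_max_left _ _)
    have hNdvd : ∀ e, φ e ≠ 0 → φ e ∣ N := by
      intro e he
      have h1 : (1 : ℤ) ≤ |φ e| := by have := abs_pos.mpr he; omega
      have h2 : max 1 |φ e| ∣ N := Finset.dvd_prod_of_mem _ (Finset.mem_univ e)
      rw [max_eq_right h1] at h2
      exact (abs_dvd _ _).mp h2
    set h : G.E → ℤ := fun e =>
      if φ e = 0 then 1 else N * (Psi G φ (G.src e) - Psi G φ (G.tgt e)) / φ e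
      with hdef
    have key : ∀ e, φ e * h e = N * (Psi G φ (G.src e) - Psi G φ (G.tgt e)) := by
      intro e
      by_cases hz : φ e = 0
      · simp [hdef, hz, psi_eq_of_zero G φ e hz]
      · simp only [hdef, if_neg hz]
        exact Int.mul_ediv_cancel' ((hNdvd e hz).mul_right _)
    have hhpos : ∀ e, 0 < h e := by
      intro e
      rcases lt_trichotomy (φ e) 0 with hlt | hz | hgt
      · have hp : 0 < G.flowVal φ (e, false) := by simp [WGraph.flowVal]; omega
        have hlt2 := psi_lt G φ hacyc hp
        simp only [WGraph.osrc, WGraph.otgt] at hlt2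
        simp only [Bool.false_eq_true, if_false] at hlt2
        have hk := key e
        by_contra hcon
        push_neg at hcon
        have h5 : 0 ≤ (-(φ e)) * (-(h e)) := mul_nonneg (by omega) (by omega)
        rw [neg_mul_neg] at h5
        have h6 : N * (Psi G φ (G.src e) - Psi G φ (G.tgt e)) < 0 :=
          mul_neg_of_pos_of_neg hNpos (by omega)
        linarith
      · simp [hdef, hz]
      · have hp : 0 < G.flowVal φ (e, true) := by simp [WGraph.flowVal]; omega
        have hlt2 := psi_lt G φ hacyc hp
        simp only [WGraph.osrc, WGraph.otgt, if_true] at hlt2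
        have hk := key e
        by_contra hcon
        push_neg at hcon
        have h5 : φ e * h e ≤ 0 := mul_nonpos_of_nonneg_of_nonpos (le_of_lt hgt) hcon
        have h6 : 0 < N * (Psi G φ (G.src e) - Psi G φ (G.tgt e)) :=
          mul_pos hNpos (by omega)
        linarith
    refine ⟨h, hhpos, ?_⟩
    intro c hcyc
    obtain ⟨hcne, hnd1, hnd2, hcyccond⟩ := hcyc
    have hlen0 : 0 < c.length := List.length_pos_iff.mpr hcne
    have hterm : ∀ oe ∈ c, G.flowVal φ oe * h oe.1 =
        N * (Psi G φ (G.osrc oe) - Psi G φ (G.otgt oe)) := by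
      rintro ⟨e, b⟩ _
      cases b
      · simp only [WGraph.flowVal, WGraph.osrc, WGraph.otgt, Bool.false_eq_true, if_false]
        rw [neg_mul, key e]
        ring
      · simp only [WGraph.flowVal, WGraph.osrc, WGraph.otgt, if_true]
        exact key e
    rw [List.map_congr_left hterm, ← Fin.sum_univ_getElem]
    have hml : (c.map (fun oe =>
        N * (Psi G φ (G.osrc oe) - Psi G φ (G.otgt oe)))).length = c.length := by simp
    have hbij : Function.Bijective (fun k : Fin c.length =>
        (⟨((k : ℕ) + 1) % c.length, Nat.mod_lt _ hlen0⟩ : Fin c.length)) := by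
      rw [← Finite.injective_iff_bijective]
      intro a b hab
      have hv : ((a : ℕ) + 1) % c.length = ((b : ℕ) + 1) % c.length :=
        congrArg Fin.val hab
      have ha := a.2
      have hb := b.2
      apply Fin.ext
      rcases Nat.lt_or_ge ((a : ℕ) + 1) c.length with h1 | h1 <;>
        rcases Nat.lt_or_ge ((b : ℕ) + 1) c.length with h2 | h2
      · rw [Nat.mod_eq_of_lt h1, Nat.mod_eq_of_lt h2] at hv; omega
      · rw [Nat.mod_eq_of_lt h1, show (b : ℕ) + 1 = c.length by omega,
          Nat.mod_self] at hv; omega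
      · rw [show (a : ℕ) + 1 = c.length by omega, Nat.mod_self,
          Nat.mod_eq_of_lt h2] at hv; omega
      · omega
    have hsum : ∑ k : Fin c.length, Psi G φ (G.otgt (c.get k)) =
        ∑ k : Fin c.length, Psi G φ (G.osrc (c.get k)) := by
      refine Fintype.sum_bijective _ hbij _ _ fun k => ?_
      exact congrArg (Psi G φ) (hcyccond k)
    refine Eq.trans (Fintype.sum_equiv (finCongr hml) _
      (fun k : Fin c.length =>
        N * (Psi G φ (G.osrc (c.get k)) - Psi G φ (G.otgt (c.get k))))
      (fun i => ?_)) ?_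
    · simp only [List.getElem_map, finCongr_apply, List.get_eq_getElem, Fin.coe_cast]
    · rw [← Finset.mul_sum, Finset.sum_sub_distrib, hsum, sub_self, mul_zero]
  · rintro ⟨h, hp, hz⟩
    intro hexy
    obtain ⟨c, hcyc, hnn, oe, hmem, hpos⟩ := hexy
    have hzero := hz c hcyc
    have hposum : 0 < (c.map fun oe => G.flowVal φ oe * h oe.1).sum := by
      apply list_sum_pos
      · intro x hx
        obtain ⟨y, hy, rfl⟩ := List.mem_map.mp hx
        exact mul_nonneg (hnn y hy) (le_of_lt (hp y.1))
      · exact ⟨_, List.mem_map_of_mem hmem, mul_pos hpos (hp oe.1)⟩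
    omega
end
end

section
/- Let Γ be a connected weighted graph, and for a cyclic subgraph P of Γ set E_P = E(Γ)\E(P) and define the divisor D_P on the graph Γ^{E_P} (Γ with one vertex inserted in the interior of each edge in E_P) by D_P(v) = deg_Γ(v) - deg_P(v)/2 - 1 + w(v) for v ∈ V(Γ) and D_P(w_e) = -1 for each inserted (exceptional) vertex w_e. Then (E_P, D_P) is a polystable pseudo-root of Γ with respect to the canonical polarization of degree g-1. Conversely, every polystable pseudo-root of Γ is of the form (E_P, D_P) for a unique cyclic subgraph P. In particular, Γ admits exactly 2^{b_1(Γ)} polystable pseudo-roots. -/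
/-! A common framework for weighted multigraphs, divisors, flows,
subdivisions, pseudo-divisors and specializations, following
"The moduli space of quasistable spin curves". -/

noncomputable section

namespace WGraph

attribute [local instance] Classical.propDecidable

variable (G : WGraph)

end WGraph
namespace WGraph

attribute [local instance] Classical.propDecidable

variable (G : WGraph)

section Basic

variable (S : Finset G.E)

@[simp] lemma subdiv_src_inl (e : {e // e ∉ S}) :
    (G.subdiv S).src (.inl e) = .inl (G.src e.1) := rfl

@[simp] lemma subdiv_tgt_inl (e : {e // e ∉ S}) :
    (G.subdiv S).tgt (.inl e) = .inl (G.tgt e.1) := rfl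

@[simp] lemma subdiv_src_inr_false (e : {e // e ∈ S}) :
    (G.subdiv S).src (.inr (e, false)) = .inl (G.src e.1) := rfl

@[simp] lemma subdiv_tgt_inr_false (e : {e // e ∈ S}) :
    (G.subdiv S).tgt (.inr (e, false)) = .inr e := rfl

@[simp] lemma subdiv_src_inr_true (e : {e // e ∈ S}) :
    (G.subdiv S).src (.inr (e, true)) = .inr e := rfl

@[simp] lemma subdiv_tgt_inr_true (e : {e // e ∈ S}) :
    (G.subdiv S).tgt (.inr (e, true)) = .inl (G.tgt e.1) := rfl

@[simp] lemma subdiv_w_inl (v : G.V) : (G.subdiv S).w (.inl v) = G.w v := rfl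

@[simp] lemma osrc_true {H : WGraph} (x : H.E) : H.osrc (x, true) = H.src x := rfl
@[simp] lemma otgt_true {H : WGraph} (x : H.E) : H.otgt (x, true) = H.tgt x := rfl
@[simp] lemma osrc_false {H : WGraph} (x : H.E) : H.osrc (x, false) = H.tgt x := rfl
@[simp] lemma otgt_false {H : WGraph} (x : H.E) : H.otgt (x, false) = H.src x := rfl
@[simp] lemma flowVal_true {H : WGraph} (φ : H.E → ℤ) (x : H.E) :
    H.flowVal φ (x, true) = φ x := rfl
@[simp] lemma flowVal_false {H : WGraph} (φ : H.E → ℤ) (x : H.E) :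
    H.flowVal φ (x, false) = -φ x := rfl

@[simp] lemma subdiv_inl_eq_inl {a b : G.V} :
    @Eq ((G.subdiv S).V) (Sum.inl a) (Sum.inl b) ↔ a = b :=
  ⟨fun h => Sum.inl.inj h, fun h => by rw [h]⟩

@[simp] lemma subdiv_inr_eq_inr {a b : {e // e ∈ S}} :
    @Eq ((G.subdiv S).V) (Sum.inr a) (Sum.inr b) ↔ a.1 = b.1 :=
  ⟨fun h => congrArg Subtype.val (Sum.inr.inj h), fun h => by rw [Subtype.ext h]⟩

@[simp] lemma subdiv_inl_ne_inr {a : G.V} {b : {e // e ∈ S}} :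
    @Eq ((G.subdiv S).V) (Sum.inl a) (Sum.inr b) ↔ False :=
  ⟨fun h => by injection h, False.elim⟩

@[simp] lemma subdiv_inr_ne_inl {a : G.V} {b : {e // e ∈ S}} :
    @Eq ((G.subdiv S).V) (Sum.inr b) (Sum.inl a) ↔ False :=
  ⟨fun h => by injection h, False.elim⟩

theorem sum_subdiv {M : Type} [AddCommMonoid M] (f : (G.subdiv S).E → M) :
    ∑ x : (G.subdiv S).E, f x
      = ∑ e : G.E, (if h : e ∈ S then f (.inr (⟨e, h⟩, false)) + f (.inr (⟨e, h⟩, true))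
          else f (.inl ⟨e, h⟩)) := by
  set F : G.E → M := fun e =>
    (if h : e ∈ S then f (.inr (⟨e, h⟩, false)) + f (.inr (⟨e, h⟩, true))
      else f (.inl ⟨e, h⟩)) with hF
  have h1 : ∑ x : (G.subdiv S).E, f x
      = (∑ a : {e // e ∉ S}, f (.inl a)) + ∑ p : {e // e ∈ S} × Bool, f (.inr p) :=
    Fintype.sum_sum_type f
  have h2 : ∑ p : {e // e ∈ S} × Bool, f (.inr p)
      = ∑ a : {e // e ∈ S}, F a.1 := by
    rw [Fintype.sum_prod_type]
    refine Finset.sum_congr rfl fun a _ => ?_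
    rw [Fintype.sum_bool, hF]
    simp only [dif_pos a.2]
    rw [add_comm]
  have h3 : (∑ a : {e // e ∉ S}, f (.inl a)) = ∑ a : {e // e ∉ S}, F a.1 := by
    refine Finset.sum_congr rfl fun a _ => ?_
    simp only [hF, dif_neg a.2]
  have h4 : ∑ a : {e // e ∈ S}, F a.1 = ∑ e ∈ S, F e :=
    (Finset.sum_subtype (p := fun e => e ∈ S) S (fun x => Iff.rfl) F).symm
  have h5 : ∑ a : {e // e ∉ S}, F a.1 = ∑ e ∈ Sᶜ, F e :=
    (Finset.sum_subtype (p := fun e => e ∉ S) Sᶜ (fun x => by simp) F).symm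
  rw [h1, h2, h3, h4, h5, add_comm, Finset.sum_add_sum_compl]

lemma deg_eq_sum (v : G.V) :
    G.deg v = ∑ e : G.E, ((if G.src e = v then 1 else 0) + (if G.tgt e = v then 1 else 0)) := by
  rw [deg, Finset.card_filter, Finset.card_filter, Finset.sum_add_distrib]

lemma degIn_eq_sum (A : Finset G.E) (v : G.V) :
    G.degIn A v = ∑ e ∈ A, ((if G.src e = v then 1 else 0) + (if G.tgt e = v then 1 else 0)) := by
  rw [degIn, Finset.card_filter, Finset.card_filter, Finset.sum_add_distrib]

lemma degIn_add_degIn_compl (A : Finset G.E) (v : G.V) :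
    G.degIn A v + G.degIn Aᶜ v = G.deg v := by
  rw [degIn_eq_sum, degIn_eq_sum, deg_eq_sum, Finset.sum_add_sum_compl]

lemma deg_subdiv_inl (v : G.V) : (G.subdiv S).deg (.inl v) = G.deg v := by
  rw [deg_eq_sum (G.subdiv S) (.inl v), deg_eq_sum, sum_subdiv]
  refine Finset.sum_congr rfl fun e _ => ?_
  by_cases h : e ∈ S <;> simp [h]

lemma deg_subdiv_inr (x : {e // e ∈ S}) : (G.subdiv S).deg (.inr x) = 2 := by
  rw [deg_eq_sum (G.subdiv S) (.inr x), sum_subdiv]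
  have : ∀ e : G.E, (if h : e ∈ S then
      (((if (G.subdiv S).src (.inr (⟨e, h⟩, false)) = .inr x then 1 else 0)
        + (if (G.subdiv S).tgt (.inr (⟨e, h⟩, false)) = .inr x then 1 else 0))
       + ((if (G.subdiv S).src (.inr (⟨e, h⟩, true)) = .inr x then 1 else 0)
        + (if (G.subdiv S).tgt (.inr (⟨e, h⟩, true)) = .inr x then 1 else 0)))
      else (((if (G.subdiv S).src (.inl ⟨e, h⟩) = .inr x then 1 else 0)
        + (if (G.subdiv S).tgt (.inl ⟨e, h⟩) = .inr x then 1 else 0))))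
      = if e = x.1 then 2 else 0 := by
    intro e
    by_cases h : e ∈ S
    · simp only [dif_pos h, subdiv_src_inr_false, subdiv_tgt_inr_false, subdiv_src_inr_true,
        subdiv_tgt_inr_true]
      by_cases he : e = x.1
      · have hx : (⟨e, h⟩ : {e // e ∈ S}) = x := Subtype.ext he
        simp [hx, he]
      · simp [Sum.inr.injEq, Subtype.ext_iff, he]
    · have he : e ≠ x.1 := fun hh => h (hh ▸ x.2)
      simp [dif_neg h, he]
  refine (Finset.sum_congr rfl fun e _ =>
    (by convert this e : _ = if e = x.1 then (2 : ℕ) else 0)).trans ?_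
  rw [Finset.sum_ite_eq' Finset.univ x.1 (fun _ => 2)]
  simp

lemma divOf_subdiv_inr (φ : (G.subdiv S).E → ℤ) (x : {e // e ∈ S}) :
    (G.subdiv S).divOf φ (.inr x) = φ (.inr (x, false)) - φ (.inr (x, true)) := by
  unfold divOf
  rw [sum_subdiv, sum_subdiv]
  have h1 : ∀ e : G.E, (if h : e ∈ S then
      ((if (G.subdiv S).tgt (.inr (⟨e, h⟩, false)) = .inr x then φ (.inr (⟨e, h⟩, false)) else 0)
       + (if (G.subdiv S).tgt (.inr (⟨e, h⟩, true)) = .inr x then φ (.inr (⟨e, h⟩, true)) else 0))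
      else (if (G.subdiv S).tgt (.inl ⟨e, h⟩) = .inr x then φ (.inl ⟨e, h⟩) else 0))
      = if e = x.1 then φ (.inr (x, false)) else 0 := by
    intro e
    by_cases h : e ∈ S
    · by_cases he : e = x.1
      · have hx : (⟨e, h⟩ : {e // e ∈ S}) = x := Subtype.ext he
        simp [hx, he]
      · simp [Sum.inr.injEq, Subtype.ext_iff, he]
    · have he : e ≠ x.1 := fun hh => h (hh ▸ x.2)
      simp [dif_neg h, he]
  have h2 : ∀ e : G.E, (if h : e ∈ S then
      ((if (G.subdiv S).src (.inr (⟨e, h⟩, false)) = .inr x then φ (.inr (⟨e, h⟩, false)) else 0)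
       + (if (G.subdiv S).src (.inr (⟨e, h⟩, true)) = .inr x then φ (.inr (⟨e, h⟩, true)) else 0))
      else (if (G.subdiv S).src (.inl ⟨e, h⟩) = .inr x then φ (.inl ⟨e, h⟩) else 0))
      = if e = x.1 then φ (.inr (x, true)) else 0 := by
    intro e
    by_cases h : e ∈ S
    · by_cases he : e = x.1
      · have hx : (⟨e, h⟩ : {e // e ∈ S}) = x := Subtype.ext he
        simp [hx, he]
      · simp [Sum.inr.injEq, Subtype.ext_iff, he]
    · have he : e ≠ x.1 := fun hh => h (hh ▸ x.2)
      simp [dif_neg h, he]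
  refine (congrArg₂ (· - ·) (Finset.sum_congr rfl fun e _ =>
      (by convert h1 e : _ = if e = x.1 then φ (.inr (x, false)) else 0))
    (Finset.sum_congr rfl fun e _ =>
      (by convert h2 e : _ = if e = x.1 then φ (.inr (x, true)) else 0))).trans ?_
  rw [Finset.sum_ite_eq' Finset.univ x.1, Finset.sum_ite_eq' Finset.univ x.1]
  simp

end Basic

end WGraph
namespace WGraph

attribute [local instance] Classical.propDecidable

variable (G : WGraph)

section Psi

variable (S : Finset G.E) (φ : (G.subdiv S).E → ℤ)

/-- The discrepancy flow on `G` attached to a flow on `G.subdiv S`. -/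
def psiOf : G.E → ℤ := fun e =>
  if h : e ∈ S then φ (.inr (⟨e, h⟩, false)) - 1 else φ (.inl ⟨e, h⟩)

lemma K_subdiv_inl (v : G.V) :
    (G.subdiv S).K (Sum.inl v) = 2 * (G.w v : ℤ) - 2 + (G.deg v : ℤ) := by
  unfold K
  rw [deg_subdiv_inl, subdiv_w_inl]

lemma K_subdiv_inr (x : {e // e ∈ S}) : (G.subdiv S).K (Sum.inr x) = 0 := by
  unfold K
  rw [deg_subdiv_inr]
  show 2 * ((0 : ℕ) : ℤ) - 2 + ((2 : ℕ) : ℤ) = 0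
  norm_num

lemma divOf_subdiv_inl
    (hb : ∀ x : {e // e ∈ S}, φ (.inr (x, false)) - φ (.inr (x, true)) = 2) (v : G.V) :
    (G.subdiv S).divOf φ (Sum.inl v) = G.divOf (G.psiOf S φ) v - (G.degIn S v : ℤ) := by
  have hdeg : ((G.degIn S v : ℤ)) = ∑ e : G.E,
      (if e ∈ S then ((if G.src e = v then 1 else 0) + (if G.tgt e = v then 1 else 0)) else 0) := by
    rw [degIn_eq_sum]
    push_cast
    rw [Finset.sum_ite_mem, Finset.univ_inter]
  unfold divOf
  rw [sum_subdiv, sum_subdiv, hdeg, ← Finset.sum_sub_distrib,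
    ← Finset.sum_sub_distrib, ← Finset.sum_sub_distrib]
  refine Finset.sum_congr rfl fun e _ => ?_
  by_cases h : e ∈ S
  · have hbe := hb ⟨e, h⟩
    simp only [dif_pos h, psiOf, subdiv_src_inl, subdiv_tgt_inl, subdiv_src_inr_false,
      subdiv_tgt_inr_false, subdiv_src_inr_true, subdiv_tgt_inr_true, subdiv_inl_eq_inl,
      subdiv_inr_ne_inl, if_false, if_pos h]
    split_ifs <;> linarith
  · simp only [dif_neg h, psiOf, subdiv_src_inl, subdiv_tgt_inl, subdiv_inl_eq_inl, if_neg h]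
    split_ifs <;> ring

lemma sum_divOf (ψ : G.E → ℤ) (W : Finset G.V) :
    ∑ v ∈ W, G.divOf ψ v
      = ∑ e : G.E, ψ e * ((if G.tgt e ∈ W then 1 else 0) - (if G.src e ∈ W then 1 else 0)) := by
  unfold divOf
  rw [Finset.sum_sub_distrib, Finset.sum_comm, Finset.sum_comm (s := W)]
  rw [← Finset.sum_sub_distrib]
  refine Finset.sum_congr rfl fun e _ => ?_
  rw [Finset.sum_ite_eq W (G.tgt e) (fun _ => ψ e), Finset.sum_ite_eq W (G.src e) (fun _ => ψ e)]
  split_ifs <;> ring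

lemma two_beta (D : (G.subdiv S).V → ℤ)
    (hb : ∀ x : {e // e ∈ S}, φ (.inr (x, false)) - φ (.inr (x, true)) = 2)
    (hdiv : ∀ y, 2 * D y + (G.subdiv S).divOf φ y = (G.subdiv S).K y) (W : Finset G.V) :
    2 * G.betaPoly S D W
      = ((Finset.univ.filter (fun e => e ∉ S ∧ G.crossing W e)).card : ℚ)
        - ((∑ v ∈ W, G.divOf (G.psiOf S φ) v : ℤ) : ℚ) := by
  have key : ∀ v ∈ W, 2 * ((D (Sum.inl v) : ℤ) : ℚ) - 2 * (G.canPol v + (G.degIn S v : ℚ) / 2)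
      = -(((G.divOf (G.psiOf S φ) v : ℤ) : ℚ)) := by
    intro v _
    have h1 := hdiv (Sum.inl v)
    rw [divOf_subdiv_inl G S φ hb v, K_subdiv_inl] at h1
    have h2 := congrArg (fun z : ℤ => (z : ℚ)) h1
    beta_reduce at h2
    push_cast at h2 ⊢
    unfold canPol K
    push_cast
    linarith
  have expand : ∑ v ∈ W, (2 * ((D (Sum.inl v) : ℤ) : ℚ) - 2 * (G.canPol v + (G.degIn S v : ℚ) / 2))
      = 2 * (∑ v ∈ W, ((D (Sum.inl v) : ℤ) : ℚ)) - 2 * ∑ v ∈ W, (G.canPol v + (G.degIn S v : ℚ) / 2) := by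
    rw [Finset.sum_sub_distrib, ← Finset.mul_sum, ← Finset.mul_sum]
  have hsum : ∑ v ∈ W, (2 * ((D (Sum.inl v) : ℤ) : ℚ) - 2 * (G.canPol v + (G.degIn S v : ℚ) / 2))
      = -((∑ v ∈ W, G.divOf (G.psiOf S φ) v : ℤ) : ℚ) := by
    rw [Finset.sum_congr rfl key]
    push_cast
    rw [Finset.sum_neg_distrib]
  rw [expand] at hsum
  unfold betaPoly
  linarith [hsum]

end Psi

end WGraph
namespace WGraph

attribute [local instance] Classical.propDecidable

attribute [reducible] subdiv

section Walks

variable {H : WGraph}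

/-- Walk predicate: `L` is a chain of oriented edges from `a` to `b`. -/
def IsWalkL (H : WGraph) : List H.OEdge → H.V → H.V → Prop
  | [], a, b => a = b
  | oe :: L, a, b => H.osrc oe = a ∧ IsWalkL H L (H.otgt oe) b

lemma IsWalkL.append {L1 L2 : List H.OEdge} {a b c : H.V}
    (h1 : H.IsWalkL L1 a b) (h2 : H.IsWalkL L2 b c) : H.IsWalkL (L1 ++ L2) a c := by
  induction L1 generalizing a with
  | nil => rwa [show a = b from h1]
  | cons oe L ih => exact ⟨h1.1, ih h1.2⟩

/-- The `i`-th vertex of a walk (with endpoint `b` as fallback). -/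
def wvtx (H : WGraph) (L : List H.OEdge) (b : H.V) (i : ℕ) : H.V :=
  if h : i < L.length then H.osrc (L.get ⟨i, h⟩) else b

lemma wvtx_cons (oe : H.OEdge) (L : List H.OEdge) (b : H.V) (i : ℕ) :
    H.wvtx (oe :: L) b (i + 1) = H.wvtx L b i := by
  unfold wvtx
  by_cases h : i < L.length
  · rw [dif_pos h, dif_pos (by simpa using Nat.succ_lt_succ h)]
    simp [List.get_cons_succ]
  · rw [dif_neg h, dif_neg (by simp; omega)]

lemma walk_take {L : List H.OEdge} {a b : H.V} (hw : H.IsWalkL L a b) :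
    ∀ i, i ≤ L.length → H.IsWalkL (L.take i) a (H.wvtx L b i) := by
  induction L generalizing a with
  | nil =>
    intro i hi
    simp only [List.length_nil, Nat.le_zero] at hi
    subst hi
    simp only [List.take_nil]
    rw [wvtx, dif_neg (by simp)]
    exact hw
  | cons oe L ih =>
    intro i hi
    match i with
    | 0 =>
      rw [wvtx, dif_pos (by simp)]
      simp only [List.take_zero, List.get_cons_zero]
      exact hw.1.symm
    | (j+1) =>
      rw [wvtx_cons]
      exact ⟨hw.1, ih hw.2 j (by simp at hi; omega)⟩

lemma walk_drop {L : List H.OEdge} {a b : H.V} (hw : H.IsWalkL L a b) :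
    ∀ i, i ≤ L.length → H.IsWalkL (L.drop i) (H.wvtx L b i) b := by
  induction L generalizing a with
  | nil =>
    intro i hi
    simp only [List.length_nil, Nat.le_zero] at hi
    subst hi
    simp only [List.drop_nil]
    rw [wvtx, dif_neg (by simp)]
    rw [show a = b from hw] at hw
    exact hw
  | cons oe L ih =>
    intro i hi
    match i with
    | 0 =>
      rw [wvtx, dif_pos (by simp)]
      simp only [List.drop_zero, List.get_cons_zero]
      exact ⟨rfl, hw.2⟩
    | (j+1) =>
      rw [wvtx_cons]
      exact ih hw.2 j (by simp at hi; omega)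

lemma walk_osrc_get {L : List H.OEdge} {a b : H.V} (_ : H.IsWalkL L a b)
    (i : ℕ) (h : i < L.length) : H.osrc (L.get ⟨i, h⟩) = H.wvtx L b i := by
  rw [wvtx, dif_pos h]

lemma walk_otgt_get {L : List H.OEdge} {a b : H.V} (hw : H.IsWalkL L a b) :
    ∀ (i : ℕ) (h : i < L.length), H.otgt (L.get ⟨i, h⟩) = H.wvtx L b (i + 1) := by
  induction L generalizing a with
  | nil => intro i h; simp at h
  | cons oe L ih =>
    intro i h
    match i with
    | 0 =>
      rw [wvtx_cons]
      cases L with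
      | nil =>
        rw [wvtx, dif_neg (by simp)]
        exact hw.2
      | cons oe' L' =>
        rw [wvtx, dif_pos (by simp)]
        exact hw.2.1.symm
    | (j+1) =>
      rw [wvtx_cons]
      have := ih hw.2 j (by simp at h; omega)
      simpa [List.get_cons_succ] using this

lemma walk_head_osrc {L : List H.OEdge} {a b : H.V} (hw : H.IsWalkL L a b)
    (h : 0 < L.length) : H.osrc (L.get ⟨0, h⟩) = a := by
  cases L with
  | nil => simp at h
  | cons oe L' => exact hw.1

lemma walk_wvtx_last {L : List H.OEdge} {a b : H.V} (_ : H.IsWalkL L a b) :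
    H.wvtx L b L.length = b := by
  rw [wvtx, dif_neg (by omega)]

lemma get_idx_congr {α : Type*} (l : List α) (i j : ℕ) (hi : i < l.length)
    (hj : j < l.length) (hij : i = j) : l.get ⟨i, hi⟩ = l.get ⟨j, hj⟩ := by
  subst hij; rfl

lemma flow_flip (φ : H.E → ℤ) (e : H.E) (b b' : Bool) (hbb : b ≠ b') :
    H.flowVal φ (e, b) = -H.flowVal φ (e, b') := by
  cases b <;> cases b'
  · exact absurd rfl hbb
  · simp
  · simp
  · exact absurd rfl hbb

lemma osrc_eq_otgt_flip (e : H.E) (b b' : Bool) (hbb : b ≠ b') :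
    H.osrc (e, b) = H.otgt (e, b') := by
  cases b <;> cases b'
  · exact absurd rfl hbb
  · simp
  · simp
  · exact absurd rfl hbb

/-- Key consequence of acyclicity: no closed nonnegative walk through an
edge of positive flow. -/
theorem no_pos_closed (φ : H.E → ℤ) (hA : H.Acyclic φ) (oe : H.OEdge)
    (hpos : 0 < H.flowVal φ oe) :
    ∀ (L : List H.OEdge), H.IsWalkL L (H.otgt oe) (H.osrc oe) →
      (∀ o ∈ L, 0 ≤ H.flowVal φ o) → False := by
  suffices h : ∀ (n : ℕ) (L : List H.OEdge), H.IsWalkL L (H.otgt oe) (H.osrc oe) →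
      (∀ o ∈ L, 0 ≤ H.flowVal φ o) → L.length = n → False by
    intro L hw hnn
    exact h L.length L hw hnn rfl
  intro n
  induction n using Nat.strong_induction_on with
  | _ n ih =>
  intro L hw hnn hlen
  subst hlen
  by_cases hC1 : ∃ (i : ℕ) (h : i < L.length), H.osrc (L.get ⟨i, h⟩) = H.osrc oe
  · obtain ⟨i, hi, heq⟩ := hC1
    have hw' : H.IsWalkL (L.take i) (H.otgt oe) (H.osrc oe) := by
      have := walk_take hw i (le_of_lt hi)
      rwa [← walk_osrc_get hw i hi, heq] at this
    exact ih (L.take i).length (by rw [List.length_take]; omega) (L.take i)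
      hw' (fun o ho => hnn o (List.take_subset i L ho)) rfl
  by_cases hC2 : ∃ (i j : ℕ) (hi : i < L.length) (hj : j < L.length), i < j ∧
      H.osrc (L.get ⟨i, hi⟩) = H.osrc (L.get ⟨j, hj⟩)
  · obtain ⟨i, j, hi, hj, hij, heq⟩ := hC2
    have hw1 : H.IsWalkL (L.take i) (H.otgt oe) (H.wvtx L (H.osrc oe) i) :=
      walk_take hw i (le_of_lt hi)
    have hw2 : H.IsWalkL (L.drop j) (H.wvtx L (H.osrc oe) j) (H.osrc oe) :=
      walk_drop hw j (le_of_lt hj)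
    have hww : H.wvtx L (H.osrc oe) i = H.wvtx L (H.osrc oe) j := by
      rw [← walk_osrc_get hw i hi, ← walk_osrc_get hw j hj, heq]
    have hw3 : H.IsWalkL (L.take i ++ L.drop j) (H.otgt oe) (H.osrc oe) :=
      IsWalkL.append (hww ▸ hw1) hw2
    refine ih (L.take i ++ L.drop j).length ?_ _ hw3 (fun o ho => hnn o ?_) rfl
    · simp only [List.length_append, List.length_take, List.length_drop]
      omega
    · rcases List.mem_append.1 ho with h | h
      · exact List.take_subset i L h
      · exact List.drop_subset j L h
  -- now build an honest oriented cycle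
  push_neg at hC1 hC2
  have hinj : ∀ (i j : ℕ) (hi : i < L.length) (hj : j < L.length),
      H.osrc (L.get ⟨i, hi⟩) = H.osrc (L.get ⟨j, hj⟩) → i = j := by
    intro i j hi hj heq
    by_contra hne
    rcases Nat.lt_or_ge i j with h | h
    · exact hC2 i j hi hj h heq
    · exact hC2 j i hj hi (by omega) heq.symm
  apply hA
  refine ⟨oe :: L, ⟨by simp, ?_, ?_, ?_⟩, ?_, oe, List.mem_cons_self, hpos⟩
  · -- underlying edges nodup
    rw [List.map_cons, List.nodup_cons]
    constructor
    · intro hmem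
      obtain ⟨i, hgi⟩ := List.mem_iff_get.1 hmem
      have hi' : (i : ℕ) < L.length := by simpa using i.isLt
      have hfst : (L.get ⟨(i : ℕ), hi'⟩).1 = oe.1 := by
        rw [← hgi]; simp [List.get_eq_getElem]
      by_cases hb : (L.get ⟨(i : ℕ), hi'⟩).2 = oe.2
      · have : L.get ⟨(i : ℕ), hi'⟩ = oe := Prod.ext hfst hb
        exact hC1 i hi' (by rw [this])
      · have hval : H.flowVal φ (L.get ⟨(i : ℕ), hi'⟩) = -H.flowVal φ oe := by
          have := flow_flip φ oe.1 (L.get ⟨(i : ℕ), hi'⟩).2 oe.2 hb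
          nth_rewrite 1 [← hfst] at this
          simpa using this
        have h0 := hnn (L.get ⟨(i : ℕ), hi'⟩) (List.get_mem L ⟨(i : ℕ), hi'⟩)
        omega
    · rw [List.nodup_iff_injective_get]
      intro i j hgij
      have hi' : (i : ℕ) < L.length := by simpa using i.isLt
      have hj' : (j : ℕ) < L.length := by simpa using j.isLt
      have hfst : (L.get ⟨(i : ℕ), hi'⟩).1 = (L.get ⟨(j : ℕ), hj'⟩).1 := by
        have h1 : (L.map Prod.fst).get i = (L.get ⟨(i : ℕ), hi'⟩).1 := by
          simp [List.get_eq_getElem]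
        have h2 : (L.map Prod.fst).get j = (L.get ⟨(j : ℕ), hj'⟩).1 := by
          simp [List.get_eq_getElem]
        rw [← h1, ← h2, hgij]
      by_cases hb : (L.get ⟨(i : ℕ), hi'⟩).2 = (L.get ⟨(j : ℕ), hj'⟩).2
      · have heq : L.get ⟨(i : ℕ), hi'⟩ = L.get ⟨(j : ℕ), hj'⟩ := Prod.ext hfst hb
        have := hinj i j hi' hj' (by rw [heq])
        exact Fin.ext (by simpa using this)
      · exfalso
        have hso : H.osrc (L.get ⟨(j : ℕ), hj'⟩) = H.otgt (L.get ⟨(i : ℕ), hi'⟩) := by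
          have := osrc_eq_otgt_flip (H := H) (L.get ⟨(i : ℕ), hi'⟩).1
            (L.get ⟨(j : ℕ), hj'⟩).2 (L.get ⟨(i : ℕ), hi'⟩).2 (fun hh => hb hh.symm)
          nth_rewrite 1 [hfst] at this
          simpa using this
        have hto : H.osrc (L.get ⟨(i : ℕ), hi'⟩) = H.otgt (L.get ⟨(j : ℕ), hj'⟩) := by
          have := osrc_eq_otgt_flip (H := H) (L.get ⟨(i : ℕ), hi'⟩).1
            (L.get ⟨(i : ℕ), hi'⟩).2 (L.get ⟨(j : ℕ), hj'⟩).2 hb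
          nth_rewrite 2 [hfst] at this
          simpa using this
        rw [walk_otgt_get hw i hi'] at hso
        rw [walk_otgt_get hw j hj'] at hto
        by_cases hii : (i : ℕ) + 1 < L.length
        · rw [← walk_osrc_get hw _ hii] at hso
          have hji : (j : ℕ) = (i : ℕ) + 1 := hinj _ _ hj' hii hso
          by_cases hjj : (j : ℕ) + 1 < L.length
          · rw [← walk_osrc_get hw _ hjj] at hto
            have : (i : ℕ) = (j : ℕ) + 1 := hinj _ _ hi' hjj hto
            omega
          · have hjl : (j : ℕ) + 1 = L.length := by omega
            rw [hjl, walk_wvtx_last hw] at hto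
            exact hC1 _ hi' hto
        · have hil : (i : ℕ) + 1 = L.length := by omega
          rw [hil, walk_wvtx_last hw] at hso
          exact hC1 _ hj' hso
  · -- osrc's nodup
    rw [List.map_cons, List.nodup_cons]
    constructor
    · intro hmem
      obtain ⟨i, hgi⟩ := List.mem_iff_get.1 hmem
      have hi' : (i : ℕ) < L.length := by simpa using i.isLt
      refine hC1 _ hi' ?_
      rw [← hgi]; simp [List.get_eq_getElem]
    · rw [List.nodup_iff_injective_get]
      intro i j hgij
      have hi' : (i : ℕ) < L.length := by simpa using i.isLt
      have hj' : (j : ℕ) < L.length := by simpa using j.isLt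
      have : H.osrc (L.get ⟨(i : ℕ), hi'⟩) = H.osrc (L.get ⟨(j : ℕ), hj'⟩) := by
        have h1 : (L.map H.osrc).get i = H.osrc (L.get ⟨(i : ℕ), hi'⟩) := by
          simp [List.get_eq_getElem]
        have h2 : (L.map H.osrc).get j = H.osrc (L.get ⟨(j : ℕ), hj'⟩) := by
          simp [List.get_eq_getElem]
        rw [← h1, ← h2, hgij]
      exact Fin.ext (by simpa using hinj _ _ hi' hj' this)
  · -- cyclic adjacency
    rintro ⟨iv, hiv⟩
    have hcl : (oe :: L).length = L.length + 1 := rfl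
    match iv, hiv with
    | 0, hiv =>
      cases L with
      | nil =>
        have hidx : (0 + 1) % (oe :: ([] : List H.OEdge)).length = 0 := by simp
        rw [get_idx_congr _ _ 0 _ (by simp) hidx]
        exact hw
      | cons oe' L' =>
        have hidx : (0 + 1) % (oe :: oe' :: L').length = 1 := by
          rw [hcl]
          exact Nat.mod_eq_of_lt (by simp)
        rw [get_idx_congr _ _ 1 _ (by simp) hidx]
        have : (oe :: oe' :: L').get ⟨1, by simp⟩ = (oe' :: L').get ⟨0, by simp⟩ := rfl
        rw [this, walk_head_osrc hw (by simp)]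
        rfl
    | (k+1), hiv =>
      have hk : k < L.length := by
        rw [hcl] at hiv
        omega
      have hget : (oe :: L).get ⟨k + 1, hiv⟩ = L.get ⟨k, hk⟩ := rfl
      rw [hget, walk_otgt_get hw k hk]
      by_cases hkk : k + 1 < L.length
      · have hidx : (k + 1 + 1) % (oe :: L).length = k + 2 := by
          rw [hcl]
          exact Nat.mod_eq_of_lt (by omega)
        rw [get_idx_congr _ _ (k + 2) _ (by rw [hcl]; omega) hidx]
        have : (oe :: L).get ⟨k + 2, by rw [hcl]; omega⟩ = L.get ⟨k + 1, hkk⟩ := rfl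
        rw [this, walk_osrc_get hw (k + 1) hkk]
      · have hkl : k + 1 = L.length := by omega
        have hidx : (k + 1 + 1) % (oe :: L).length = 0 := by
          rw [hcl, hkl]
          simp
        rw [get_idx_congr _ _ 0 _ (by simp) hidx]
        rw [hkl, walk_wvtx_last hw]
        rfl
  · intro o ho
    rcases List.mem_cons.1 ho with h | h
    · exact h ▸ le_of_lt hpos
    · exact hnn o h

end Walks

end WGraph
namespace WGraph

attribute [local instance] Classical.propDecidable

variable (G : WGraph)

section RootCore

variable (S : Finset G.E) (φ : (G.subdiv S).E → ℤ)

lemma psiOf_pos {e : G.E} (hS : e ∈ S) :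
    G.psiOf S φ e = φ (.inr (⟨e, hS⟩, false)) - 1 := dif_pos hS

lemma psiOf_neg {e : G.E} (hS : e ∉ S) :
    G.psiOf S φ e = φ (.inl ⟨e, hS⟩) := dif_neg hS

/-- One traversable step for the discrepancy flow. -/
def TStep (a b : G.V) : Prop :=
  ∃ e : G.E,
    (e ∉ S ∧ ((G.src e = a ∧ G.tgt e = b ∧ 0 ≤ G.psiOf S φ e) ∨
      (G.src e = b ∧ G.tgt e = a ∧ G.psiOf S φ e ≤ 0))) ∨
    (e ∈ S ∧ ((G.src e = a ∧ G.tgt e = b ∧ 1 ≤ G.psiOf S φ e) ∨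
      (G.src e = b ∧ G.tgt e = a ∧ G.psiOf S φ e ≤ -1)))

lemma tstep_walk (hb : ∀ x : {e // e ∈ S}, φ (.inr (x, false)) - φ (.inr (x, true)) = 2)
    {a b : G.V} (hstep : G.TStep S φ a b) :
    ∃ L : List (G.subdiv S).OEdge, (G.subdiv S).IsWalkL L (.inl a) (.inl b) ∧
      ∀ o ∈ L, 0 ≤ (G.subdiv S).flowVal φ o := by
  obtain ⟨e, he⟩ := hstep
  rcases he with ⟨hS, hcase⟩ | ⟨hS, hcase⟩
  · rcases hcase with ⟨h1, h2, h3⟩ | ⟨h1, h2, h3⟩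
    · refine ⟨[(.inl ⟨e, hS⟩, true)], ⟨by rw [← h1]; rfl, by rw [← h2]; rfl⟩, ?_⟩
      intro o ho
      rw [List.mem_singleton] at ho
      subst ho
      rw [flowVal_true]
      rw [G.psiOf_neg S φ hS] at h3
      exact h3
    · refine ⟨[(.inl ⟨e, hS⟩, false)], ⟨by rw [← h2]; rfl, by rw [← h1]; rfl⟩, ?_⟩
      intro o ho
      rw [List.mem_singleton] at ho
      subst ho
      rw [flowVal_false]
      rw [G.psiOf_neg S φ hS] at h3
      omega
  · have hbe := hb ⟨e, hS⟩
    rcases hcase with ⟨h1, h2, h3⟩ | ⟨h1, h2, h3⟩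
    · rw [G.psiOf_pos S φ hS] at h3
      refine ⟨[(.inr (⟨e, hS⟩, false), true), (.inr (⟨e, hS⟩, true), true)],
        ⟨by rw [← h1]; rfl, rfl, by rw [← h2]; rfl⟩, ?_⟩
      intro o ho
      rcases List.mem_cons.1 ho with h | h
      · subst h; rw [flowVal_true]; omega
      · rw [List.mem_singleton] at h; subst h; rw [flowVal_true]; omega
    · rw [G.psiOf_pos S φ hS] at h3
      refine ⟨[(.inr (⟨e, hS⟩, true), false), (.inr (⟨e, hS⟩, false), false)],
        ⟨by rw [← h2]; rfl, rfl, by rw [← h1]; rfl⟩, ?_⟩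
      intro o ho
      rcases List.mem_cons.1 ho with h | h
      · subst h; rw [flowVal_false]; omega
      · rw [List.mem_singleton] at h; subst h; rw [flowVal_false]; omega

lemma treach_walk (hb : ∀ x : {e // e ∈ S}, φ (.inr (x, false)) - φ (.inr (x, true)) = 2)
    {a b : G.V} (hreach : Relation.ReflTransGen (G.TStep S φ) a b) :
    ∃ L : List (G.subdiv S).OEdge, (G.subdiv S).IsWalkL L (.inl a) (.inl b) ∧
      ∀ o ∈ L, 0 ≤ (G.subdiv S).flowVal φ o := by
  induction hreach with
  | refl => exact ⟨[], rfl, by simp⟩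
  | tail hr hstep ih =>
    obtain ⟨L1, hw1, hn1⟩ := ih
    obtain ⟨L2, hw2, hn2⟩ := G.tstep_walk S φ hb hstep
    refine ⟨L1 ++ L2, IsWalkL.append hw1 hw2, ?_⟩
    intro o ho
    rcases List.mem_append.1 ho with h | h
    · exact hn1 o h
    · exact hn2 o h

/-- Cut argument: across the reachability cut, the discrepancy flow vanishes. -/
lemma cut_psi_zero (D : (G.subdiv S).V → ℤ)
    (hb : ∀ x : {e // e ∈ S}, φ (.inr (x, false)) - φ (.inr (x, true)) = 2)
    (hdiv : ∀ y, 2 * D y + (G.subdiv S).divOf φ y = (G.subdiv S).K y)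
    (hps : G.IsPolystable S D) (v : G.V) (e : G.E)
    (hcross : (G.src e ∈ Finset.univ.filter (fun y => Relation.ReflTransGen (G.TStep S φ) v y)
        ∧ G.tgt e ∉ Finset.univ.filter (fun y => Relation.ReflTransGen (G.TStep S φ) v y))
      ∨ (G.tgt e ∈ Finset.univ.filter (fun y => Relation.ReflTransGen (G.TStep S φ) v y)
        ∧ G.src e ∉ Finset.univ.filter (fun y => Relation.ReflTransGen (G.TStep S φ) v y))) :
    G.psiOf S φ e = 0 := by
  set W := Finset.univ.filter (fun y => Relation.ReflTransGen (G.TStep S φ) v y) with hWdef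
  have hclosed : ∀ a b : G.V, a ∈ W → G.TStep S φ a b → b ∈ W := by
    intro a b ha hstep
    rw [hWdef, Finset.mem_filter] at ha ⊢
    exact ⟨Finset.mem_univ b, ha.2.tail hstep⟩
  -- pointwise bound on flow terms
  have hbound : ∀ e' : G.E,
      (if e' ∉ S ∧ G.crossing W e' then (1 : ℤ) else 0)
        ≤ G.psiOf S φ e' * ((if G.tgt e' ∈ W then 1 else 0) - (if G.src e' ∈ W then 1 else 0)) := by
    intro e'
    by_cases hs : G.src e' ∈ W <;> by_cases ht : G.tgt e' ∈ W
    · have hcr : ¬ G.crossing W e' := by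
        rw [crossing]
        simp [hs, ht]
      simp [hcr, hs, ht]
    · -- src in, tgt out: no step out
      have hnostep : ¬ G.TStep S φ (G.src e') (G.tgt e') := fun hstep => ht (hclosed _ _ hs hstep)
      have hcr : G.crossing W e' := by
        rw [crossing]
        simp [hs, ht]
      by_cases hS : e' ∈ S
      · have hψle : G.psiOf S φ e' ≤ 0 := by
          by_contra hgt
          exact hnostep ⟨e', Or.inr ⟨hS, Or.inl ⟨rfl, rfl, by omega⟩⟩⟩
        have hns : ¬ (e' ∉ S ∧ G.crossing W e') := fun hh => hh.1 hS
        rw [if_neg hns, if_neg ht, if_pos hs]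
        nlinarith
      · have hψle : G.psiOf S φ e' ≤ -1 := by
          by_contra hgt
          exact hnostep ⟨e', Or.inl ⟨hS, Or.inl ⟨rfl, rfl, by omega⟩⟩⟩
        rw [if_pos ⟨hS, hcr⟩, if_neg ht, if_pos hs]
        nlinarith
    · -- tgt in, src out
      have hnostep : ¬ G.TStep S φ (G.tgt e') (G.src e') := fun hstep => hs (hclosed _ _ ht hstep)
      have hcr : G.crossing W e' := by
        rw [crossing]
        simp [hs, ht]
      by_cases hS : e' ∈ S
      · have hψge : 0 ≤ G.psiOf S φ e' := by
          by_contra hlt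
          exact hnostep ⟨e', Or.inr ⟨hS, Or.inr ⟨rfl, rfl, by omega⟩⟩⟩
        have hns : ¬ (e' ∉ S ∧ G.crossing W e') := fun hh => hh.1 hS
        rw [if_neg hns, if_pos ht, if_neg hs]
        nlinarith
      · have hψge : 1 ≤ G.psiOf S φ e' := by
          by_contra hlt
          exact hnostep ⟨e', Or.inl ⟨hS, Or.inr ⟨rfl, rfl, by omega⟩⟩⟩
        rw [if_pos ⟨hS, hcr⟩, if_pos ht, if_neg hs]
        nlinarith
    · have hcr : ¬ G.crossing W e' := by
        rw [crossing]
        simp [hs, ht]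
      simp [hcr, hs, ht]
  have hcut : ∑ w ∈ W, G.divOf (G.psiOf S φ) w
      = ∑ e' : G.E, G.psiOf S φ e' * ((if G.tgt e' ∈ W then 1 else 0) - (if G.src e' ∈ W then 1 else 0)) :=
    G.sum_divOf (G.psiOf S φ) W
  have hcard : ((Finset.univ.filter (fun e' => e' ∉ S ∧ G.crossing W e')).card : ℤ)
      = ∑ e' : G.E, (if e' ∉ S ∧ G.crossing W e' then (1 : ℤ) else 0) := by
    rw [Finset.card_filter]
    push_cast
    rfl
  have hge : ((Finset.univ.filter (fun e' => e' ∉ S ∧ G.crossing W e')).card : ℤ)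
      ≤ ∑ w ∈ W, G.divOf (G.psiOf S φ) w := by
    rw [hcut, hcard]
    exact Finset.sum_le_sum fun e' _ => hbound e'
  have h2b := G.two_beta S φ D hb hdiv W
  have hps' := hps W
  -- the crossing count must vanish
  have hzero : (Finset.univ.filter (fun e' => e' ∉ S ∧ G.crossing W e')).card = 0 := by
    by_contra hpos'
    have hex : ∃ e', e' ∉ S ∧ G.crossing W e' := by
      have : (Finset.univ.filter (fun e' => e' ∉ S ∧ G.crossing W e')).Nonempty :=
        Finset.card_pos.1 (Nat.pos_of_ne_zero hpos')
      obtain ⟨e', he'⟩ := this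
      exact ⟨e', (Finset.mem_filter.1 he').2⟩
    have hβ := hps'.2 hex
    have : ((∑ w ∈ W, G.divOf (G.psiOf S φ) w : ℤ) : ℚ)
        < ((Finset.univ.filter (fun e' => e' ∉ S ∧ G.crossing W e')).card : ℚ) := by
      linarith
    have : (∑ w ∈ W, G.divOf (G.psiOf S φ) w : ℤ)
        < ((Finset.univ.filter (fun e' => e' ∉ S ∧ G.crossing W e')).card : ℤ) := by
      exact_mod_cast this
    omega
  have hsum0 : ∑ w ∈ W, G.divOf (G.psiOf S φ) w = 0 := by
    have hle : (0:ℚ) ≤ 2 * G.betaPoly S D W := by linarith [hps'.1]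
    rw [hzero] at h2b
    rw [Nat.cast_zero] at h2b
    have : ((∑ w ∈ W, G.divOf (G.psiOf S φ) w : ℤ) : ℚ) ≤ 0 := by
      linarith
    have hup : (∑ w ∈ W, G.divOf (G.psiOf S φ) w : ℤ) ≤ 0 := by exact_mod_cast this
    have hdn : (0:ℤ) ≤ ∑ w ∈ W, G.divOf (G.psiOf S φ) w := by
      rw [hzero] at hge
      exact_mod_cast hge
    omega
  -- each term vanishes
  have hterm0 : ∀ e' : G.E,
      G.psiOf S φ e' * ((if G.tgt e' ∈ W then 1 else 0) - (if G.src e' ∈ W then 1 else 0)) = 0 := by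
    have hnn : ∀ e' ∈ Finset.univ (α := G.E),
        (0:ℤ) ≤ G.psiOf S φ e' * ((if G.tgt e' ∈ W then 1 else 0) - (if G.src e' ∈ W then 1 else 0)) := by
      intro e' _
      refine le_trans ?_ (hbound e')
      split <;> omega
    have := (Finset.sum_eq_zero_iff_of_nonneg hnn).1 (by rw [← hcut, hsum0])
    intro e'
    exact this e' (Finset.mem_univ e')
  have := hterm0 e
  rcases hcross with ⟨hs, ht⟩ | ⟨ht, hs⟩
  · rw [if_pos hs, if_neg ht] at this
    nlinarith [this]
  · rw [if_pos ht, if_neg hs] at this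
    nlinarith [this]

/-- Core of statement 6: the discrepancy flow of a polystable pseudo-root vanishes. -/
theorem psiOf_eq_zero (D : (G.subdiv S).V → ℤ)
    (hb : ∀ x : {e // e ∈ S}, φ (.inr (x, false)) - φ (.inr (x, true)) = 2)
    (hac : (G.subdiv S).Acyclic φ)
    (hdiv : ∀ y, 2 * D y + (G.subdiv S).divOf φ y = (G.subdiv S).K y)
    (hps : G.IsPolystable S D) : ∀ e, G.psiOf S φ e = 0 := by
  intro e0
  by_contra hne
  rcases lt_trichotomy (G.psiOf S φ e0) 0 with hlt | h0 | hgt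
  · -- flow from tgt to src
    set v := G.src e0
    set u := G.tgt e0
    set W := Finset.univ.filter (fun y => Relation.ReflTransGen (G.TStep S φ) v y) with hWdef
    have hvW : v ∈ W := by
      rw [hWdef, Finset.mem_filter]
      exact ⟨Finset.mem_univ v, Relation.ReflTransGen.refl⟩
    have huW : u ∈ W := by
      by_contra huW
      exact hne (G.cut_psi_zero S φ D hb hdiv hps v e0 (Or.inl ⟨hvW, huW⟩))
    have hreach : Relation.ReflTransGen (G.TStep S φ) v u := (Finset.mem_filter.1 huW).2
    obtain ⟨L1, hw1, hn1⟩ := G.treach_walk S φ hb hreach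
    by_cases hS : e0 ∈ S
    · have hbe := hb ⟨e0, hS⟩
      have hψ : G.psiOf S φ e0 = φ (.inr (⟨e0, hS⟩, false)) - 1 := G.psiOf_pos S φ hS
      refine no_pos_closed φ hac (.inr (⟨e0, hS⟩, true), false) (by rw [flowVal_false]; omega)
        ([(.inr (⟨e0, hS⟩, false), false)] ++ L1) ?_ ?_
      · refine IsWalkL.append ?_ hw1
        exact ⟨by rw [osrc_false, otgt_false]; rfl, by rw [otgt_false]; rfl⟩
      · intro o ho
        rcases List.mem_append.1 ho with h | h
        · rw [List.mem_singleton] at h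
          subst h
          rw [flowVal_false]
          omega
        · exact hn1 o h
    · have hψ : G.psiOf S φ e0 = φ (.inl ⟨e0, hS⟩) := G.psiOf_neg S φ hS
      refine no_pos_closed φ hac (.inl ⟨e0, hS⟩, false) (by rw [flowVal_false]; omega)
        L1 ?_ hn1
      rw [otgt_false, osrc_false]
      exact hw1
  · exact hne h0
  · -- flow from src to tgt
    set v := G.tgt e0
    set u := G.src e0
    set W := Finset.univ.filter (fun y => Relation.ReflTransGen (G.TStep S φ) v y) with hWdef
    have hvW : v ∈ W := by
      rw [hWdef, Finset.mem_filter]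
      exact ⟨Finset.mem_univ v, Relation.ReflTransGen.refl⟩
    have huW : u ∈ W := by
      by_contra huW
      exact hne (G.cut_psi_zero S φ D hb hdiv hps v e0 (Or.inr ⟨hvW, huW⟩))
    have hreach : Relation.ReflTransGen (G.TStep S φ) v u := (Finset.mem_filter.1 huW).2
    obtain ⟨L1, hw1, hn1⟩ := G.treach_walk S φ hb hreach
    by_cases hS : e0 ∈ S
    · have hbe := hb ⟨e0, hS⟩
      have hψ : G.psiOf S φ e0 = φ (.inr (⟨e0, hS⟩, false)) - 1 := G.psiOf_pos S φ hS
      refine no_pos_closed φ hac (.inr (⟨e0, hS⟩, false), true) (by rw [flowVal_true]; omega)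
        ([(.inr (⟨e0, hS⟩, true), true)] ++ L1) ?_ ?_
      · refine IsWalkL.append ?_ hw1
        exact ⟨by rw [osrc_true, otgt_true]; rfl, by rw [otgt_true]; rfl⟩
      · intro o ho
        rcases List.mem_append.1 ho with h | h
        · rw [List.mem_singleton] at h
          subst h
          rw [flowVal_true]
          omega
        · exact hn1 o h
    · have hψ : G.psiOf S φ e0 = φ (.inl ⟨e0, hS⟩) := G.psiOf_neg S φ hS
      refine no_pos_closed φ hac (.inl ⟨e0, hS⟩, true) (by rw [flowVal_true]; omega)
        L1 ?_ hn1
      rw [otgt_true, osrc_true]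
      exact hw1

end RootCore

end WGraph
namespace WGraph

attribute [local instance] Classical.propDecidable

variable (G : WGraph)

section Statement6

/-- Structure of polystable pseudo-roots: the complement of `S` is cyclic and
the divisor is the canonical one. -/
theorem root_structure (S : Finset G.E) (D : (G.subdiv S).V → ℤ)
    (hroot : G.IsPseudoRoot S D) (hps : G.IsPolystable S D) :
    G.IsCyclicSubgraph Sᶜ ∧
      ∀ v : G.V, D (.inl v) = (G.deg v : ℤ) - (G.degIn Sᶜ v : ℤ) / 2 - 1 + (G.w v : ℤ) := by
  obtain ⟨hPD, φ, hac, hdiv⟩ := hroot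
  have hb : ∀ x : {e // e ∈ S}, φ (.inr (x, false)) - φ (.inr (x, true)) = 2 := by
    intro x
    have h := hdiv (.inr x)
    rw [G.divOf_subdiv_inr S φ x, G.K_subdiv_inr, hPD x] at h
    omega
  have hψ := G.psiOf_eq_zero S φ D hb hac hdiv hps
  have hdivψ : ∀ v, G.divOf (G.psiOf S φ) v = 0 := by
    intro v
    rw [divOf]
    simp [hψ]
  have hinl : ∀ v, (G.subdiv S).divOf φ (.inl v) = -(G.degIn S v : ℤ) := by
    intro v
    rw [G.divOf_subdiv_inl S φ hb v, hdivψ]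
    ring
  have hsplit : ∀ v, G.degIn S v + G.degIn Sᶜ v = G.deg v := G.degIn_add_degIn_compl S
  constructor
  · intro v
    have h := hdiv (.inl v)
    rw [hinl v, G.K_subdiv_inl] at h
    have hs := hsplit v
    rw [Nat.even_iff]
    omega
  · intro v
    have h := hdiv (.inl v)
    rw [hinl v, G.K_subdiv_inl] at h
    have hs := hsplit v
    omega

/-- The canonical acyclic flow attached to a cyclic subgraph. -/
def phiP (P : Finset G.E) : (G.subdiv Pᶜ).E → ℤ := fun x =>
  match x with
  | .inl _ => 0
  | .inr (_, b) => if b then -1 else 1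

lemma phiP_inr_false (P : Finset G.E) (x : {e // e ∈ Pᶜ}) :
    G.phiP P (.inr (x, false)) = 1 := rfl

lemma phiP_inr_true (P : Finset G.E) (x : {e // e ∈ Pᶜ}) :
    G.phiP P (.inr (x, true)) = -1 := rfl

lemma phiP_inl (P : Finset G.E) (x : {e // e ∉ Pᶜ}) :
    G.phiP P (.inl x) = 0 := rfl

lemma phiP_hb (P : Finset G.E) :
    ∀ x : {e // e ∈ Pᶜ}, G.phiP P (.inr (x, false)) - G.phiP P (.inr (x, true)) = 2 := by
  intro x
  rw [phiP_inr_false, phiP_inr_true]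
  norm_num

lemma phiP_psi (P : Finset G.E) : ∀ e, G.psiOf Pᶜ (G.phiP P) e = 0 := by
  intro e
  by_cases h : e ∈ Pᶜ
  · rw [G.psiOf_pos Pᶜ (G.phiP P) h, phiP_inr_false]
    norm_num
  · rw [G.psiOf_neg Pᶜ (G.phiP P) h, phiP_inl]

lemma phiP_divpsi (P : Finset G.E) : ∀ v, G.divOf (G.psiOf Pᶜ (G.phiP P)) v = 0 := by
  intro v
  rw [divOf]
  simp [phiP_psi]

lemma DP_inl (P : Finset G.E) (v : G.V) :
    G.DP P (.inl v) = (G.deg v : ℤ) - (G.degIn P v : ℤ) / 2 - 1 + (G.w v : ℤ) := rfl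

lemma DP_inr (P : Finset G.E) (x : {e // e ∈ Pᶜ}) : G.DP P (.inr x) = -1 := rfl

lemma phiP_div (P : Finset G.E) (hP : G.IsCyclicSubgraph P) :
    ∀ y, 2 * G.DP P y + (G.subdiv Pᶜ).divOf (G.phiP P) y = (G.subdiv Pᶜ).K y := by
  intro y
  match y with
  | .inl v =>
    rw [G.divOf_subdiv_inl Pᶜ (G.phiP P) (G.phiP_hb P) v, G.phiP_divpsi P v, G.K_subdiv_inl,
      DP_inl]
    have hsplit := G.degIn_add_degIn_compl P v
    have hev := hP v
    rw [Nat.even_iff] at hev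
    omega
  | .inr x =>
    rw [G.divOf_subdiv_inr, G.K_subdiv_inr, DP_inr, phiP_inr_false, phiP_inr_true]
    norm_num

lemma phiP_acyclic (P : Finset G.E) : (G.subdiv Pᶜ).Acyclic (G.phiP P) := by
  rintro ⟨c, ⟨hne, hnodupE, hnodupV, hcyc⟩, hnn, oe, hoe, hpos⟩
  -- the positive edge points into an exceptional vertex
  have htgt : ∃ x : {e // e ∈ Pᶜ}, (G.subdiv Pᶜ).otgt oe = .inr x := by
    rcases oe with ⟨x', bb⟩
    rcases x' with e' | ⟨e', b'⟩
    · exfalso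
      cases bb <;> simp [phiP_inl, flowVal] at hpos <;> omega
    · cases b'
      · cases bb
        · exfalso
          rw [flowVal_false, phiP_inr_false] at hpos
          omega
        · exact ⟨e', by rw [otgt_true, subdiv_tgt_inr_false]⟩
      · cases bb
        · exact ⟨e', by rw [otgt_false, subdiv_src_inr_true]⟩
        · exfalso
          rw [flowVal_true, phiP_inr_true] at hpos
          omega
  obtain ⟨x, hx⟩ := htgt
  obtain ⟨i, hgi⟩ := List.mem_iff_get.1 hoe
  have hnext := hcyc i
  rw [hgi, hx] at hnext
  -- the next edge leaves the exceptional vertex: negative flow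
  set j : Fin c.length := ⟨((i : ℕ) + 1) % c.length, Nat.mod_lt _ i.pos⟩ with hj
  have hmem : c.get j ∈ c := List.get_mem c _
  have hflow := hnn (c.get j) hmem
  rcases hcj : c.get j with ⟨x'', b''⟩
  rw [hcj] at hnext
  rcases x'' with e'' | ⟨e'', b2⟩
  · -- ordinary edge: its osrc is an original vertex
    exfalso
    cases b''
    · rw [osrc_false, subdiv_tgt_inl] at hnext
      exact (G.subdiv_inl_ne_inr Pᶜ).1 hnext.symm
    · rw [osrc_true, subdiv_src_inl] at hnext
      exact (G.subdiv_inl_ne_inr Pᶜ).1 hnext.symm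
  · cases b''
    · cases b2
      · -- osrc (inr (e,false), false) = tgt = inr e : flow = -phiP(inr false) = -1
        rw [hcj, flowVal_false, phiP_inr_false] at hflow
        omega
      · exfalso
        rw [osrc_false, subdiv_tgt_inr_true] at hnext
        exact (G.subdiv_inl_ne_inr Pᶜ).1 hnext.symm
    · cases b2
      · exfalso
        rw [osrc_true, subdiv_src_inr_false] at hnext
        exact (G.subdiv_inl_ne_inr Pᶜ).1 hnext.symm
      · rw [hcj, flowVal_true, phiP_inr_true] at hflow
        omega

theorem part1 (P : Finset G.E) (hP : G.IsCyclicSubgraph P) :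
    G.IsPseudoRoot Pᶜ (G.DP P) ∧ G.IsPolystable Pᶜ (G.DP P) := by
  constructor
  · exact ⟨fun x => rfl, G.phiP P, G.phiP_acyclic P, G.phiP_div P hP⟩
  · intro W
    have h2b := G.two_beta Pᶜ (G.phiP P) (G.DP P) (G.phiP_hb P) (G.phiP_div P hP) W
    have hzero : ∑ v ∈ W, G.divOf (G.psiOf Pᶜ (G.phiP P)) v = 0 :=
      Finset.sum_eq_zero fun v _ => G.phiP_divpsi P v
    rw [hzero] at h2b
    rw [Int.cast_zero, sub_zero] at h2b
    constructor
    · have : (0:ℚ) ≤ ((Finset.univ.filter (fun e => e ∉ Pᶜ ∧ G.crossing W e)).card : ℚ) :=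
        Nat.cast_nonneg _
      linarith
    · rintro ⟨e, he, hcr⟩
      have hpos : 0 < (Finset.univ.filter (fun e => e ∉ Pᶜ ∧ G.crossing W e)).card :=
        Finset.card_pos.2 ⟨e, Finset.mem_filter.2 ⟨Finset.mem_univ e, he, hcr⟩⟩
      have : (0:ℚ) < ((Finset.univ.filter (fun e => e ∉ Pᶜ ∧ G.crossing W e)).card : ℚ) := by
        exact_mod_cast hpos
      linarith

end Statement6

end WGraph
namespace WGraph

attribute [local instance] Classical.propDecidable

variable (G : WGraph)

section Counting

/-- The boundary map over `𝔽₂`. -/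
def bmap : (G.E → ZMod 2) →ₗ[ZMod 2] (G.V → ZMod 2) where
  toFun f := fun v =>
    ∑ e : G.E, f e * ((if G.src e = v then 1 else 0) + (if G.tgt e = v then 1 else 0))
  map_add' f g := by
    funext v
    simp only [Pi.add_apply, add_mul]
    rw [Finset.sum_add_distrib]
  map_smul' c f := by
    funext v
    simp only [Pi.smul_apply, smul_eq_mul, RingHom.id_apply]
    rw [Finset.mul_sum]
    exact Finset.sum_congr rfl fun e _ => by ring

lemma bmap_indicator (P : Finset G.E) (v : G.V) :
    G.bmap (fun e => if e ∈ P then 1 else 0) v = ((G.degIn P v : ℕ) : ZMod 2) := by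
  have h1 : G.bmap (fun e => if e ∈ P then 1 else 0) v
      = ∑ e ∈ P, ((if G.src e = v then 1 else 0) + (if G.tgt e = v then (1:ZMod 2) else 0)) := by
    show (∑ e : G.E, (if e ∈ P then (1:ZMod 2) else 0) *
        ((if G.src e = v then 1 else 0) + (if G.tgt e = v then 1 else 0))) = _
    calc ∑ e : G.E, (if e ∈ P then (1:ZMod 2) else 0) *
          ((if G.src e = v then 1 else 0) + (if G.tgt e = v then 1 else 0))
        = ∑ e : G.E, (if e ∈ P then
            ((if G.src e = v then 1 else 0) + (if G.tgt e = v then (1:ZMod 2) else 0)) else 0) :=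
          Finset.sum_congr rfl fun e _ => by split_ifs with h <;> ring
      _ = ∑ e ∈ Finset.univ ∩ P,
            ((if G.src e = v then 1 else 0) + (if G.tgt e = v then (1:ZMod 2) else 0)) :=
          Finset.sum_ite_mem _ _ _
      _ = ∑ e ∈ P, ((if G.src e = v then 1 else 0) + (if G.tgt e = v then (1:ZMod 2) else 0)) := by
          rw [Finset.univ_inter]
  rw [h1, degIn_eq_sum]
  push_cast
  exact Finset.sum_congr rfl fun e _ => by split_ifs <;> norm_num

lemma cyclic_iff_ker (P : Finset G.E) :
    G.IsCyclicSubgraph P ↔ G.bmap (fun e => if e ∈ P then 1 else 0) = 0 := by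
  constructor
  · intro h
    funext v
    rw [bmap_indicator]
    have := h v
    rw [Nat.even_iff] at this
    show ((G.degIn P v : ℕ) : ZMod 2) = 0
    rw [ZMod.natCast_eq_zero_iff]
    omega
  · intro h v
    have := congrFun h v
    rw [bmap_indicator] at this
    rw [show ((0 : G.V → ZMod 2) v) = 0 from rfl] at this
    rw [ZMod.natCast_eq_zero_iff] at this
    rw [Nat.even_iff]
    omega

/-- Cyclic subgraphs are the kernel of the boundary map. -/
def cyclicEquiv : {P : Finset G.E // G.IsCyclicSubgraph P} ≃ LinearMap.ker G.bmap where
  toFun P := ⟨fun e => if e ∈ P.1 then 1 else 0,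
    by rw [LinearMap.mem_ker]; exact (G.cyclic_iff_ker P.1).1 P.2⟩
  invFun f := ⟨Finset.univ.filter (fun e => f.1 e = 1), by
    have hf : (fun e => if e ∈ Finset.univ.filter (fun e => f.1 e = 1) then (1 : ZMod 2) else 0)
        = f.1 := by
      funext e
      have h01 : f.1 e = 0 ∨ f.1 e = 1 := by
        have : ∀ x : ZMod 2, x = 0 ∨ x = 1 := by decide
        exact this _
      rcases h01 with h | h <;> simp [Finset.mem_filter, h]
    refine (G.cyclic_iff_ker _).2 ?_
    rw [hf]
    exact LinearMap.mem_ker.1 f.2⟩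
  left_inv P := by
    apply Subtype.ext
    apply Finset.ext
    intro e
    by_cases h : e ∈ P.1 <;> simp [Finset.mem_filter, h]
  right_inv f := by
    apply Subtype.ext
    funext e
    have h01 : f.1 e = 0 ∨ f.1 e = 1 := by
      have : ∀ x : ZMod 2, x = 0 ∨ x = 1 := by decide
      exact this _
    show (if e ∈ Finset.univ.filter (fun e => f.1 e = 1) then (1 : ZMod 2) else 0) = f.1 e
    rcases h01 with h | h <;> simp [Finset.mem_filter, h]

/-- The augmentation functional. -/
def sumF : (G.V → ZMod 2) →ₗ[ZMod 2] ZMod 2 where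
  toFun g := ∑ v : G.V, g v
  map_add' f g := by
    simp only [Pi.add_apply]
    rw [Finset.sum_add_distrib]
  map_smul' c f := by
    simp only [Pi.smul_apply, smul_eq_mul, RingHom.id_apply]
    rw [Finset.mul_sum]

lemma range_bmap (hconn : G.Connected) :
    LinearMap.range G.bmap = LinearMap.ker G.sumF := by
  apply le_antisymm
  · rintro g ⟨f, rfl⟩
    rw [LinearMap.mem_ker]
    show ∑ v : G.V, ∑ e : G.E, f e * _ = 0
    rw [Finset.sum_comm]
    rw [Finset.sum_congr rfl (fun e _ => (Finset.mul_sum _ _ _).symm)]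
    have hin : ∀ e : G.E, (∑ v : G.V,
        ((if G.src e = v then (1:ZMod 2) else 0) + (if G.tgt e = v then 1 else 0))) = 0 := by
      intro e
      rw [Finset.sum_add_distrib, Finset.sum_ite_eq Finset.univ (G.src e) (fun _ => (1:ZMod 2)),
        Finset.sum_ite_eq Finset.univ (G.tgt e) (fun _ => (1:ZMod 2))]
      simp only [Finset.mem_univ, if_true]
      decide
    rw [Finset.sum_congr rfl (fun e _ => by rw [hin e, mul_zero])]
    exact Finset.sum_const_zero
  · intro g hg
    rw [LinearMap.mem_ker] at hg
    obtain ⟨v₀⟩ := hconn.1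
    -- characteristic differences are in the range
    have claim1 : ∀ u u' : G.V, Relation.ReflTransGen (G.adjVia Finset.univ) u u' →
        (fun v => (if u = v then (1:ZMod 2) else 0) + (if u' = v then 1 else 0))
          ∈ LinearMap.range G.bmap := by
      intro u u' hre
      induction hre with
      | refl =>
        have : (fun v => (if u = v then (1:ZMod 2) else 0) + (if u = v then 1 else 0))
            = (0 : G.V → ZMod 2) := by
          funext v
          rw [Pi.zero_apply]
          by_cases h : u = v
          · rw [if_pos h]
            decide
          · rw [if_neg h]
            decide
        rw [this]
        exact Submodule.zero_mem _
      | tail hr hadj ih =>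
        rename_i b c
        obtain ⟨e, _, hor⟩ := hadj
        have hedge : (fun v => (if b = v then (1:ZMod 2) else 0) + (if c = v then 1 else 0))
            ∈ LinearMap.range G.bmap := by
          refine ⟨fun e' => if e' = e then 1 else 0, ?_⟩
          funext v
          show (∑ e' : G.E, _) = _
          rw [Finset.sum_congr rfl (fun e' _ => by
            rw [ite_mul, one_mul, zero_mul] :
              ∀ e' ∈ Finset.univ, (if e' = e then (1:ZMod 2) else 0) * _
                = if e' = e then ((if G.src e' = v then (1:ZMod 2) else 0)
                    + (if G.tgt e' = v then 1 else 0)) else 0)]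
          rw [Finset.sum_ite_eq' Finset.univ e]
          simp only [Finset.mem_univ, if_true]
          rcases hor with ⟨h1, h2⟩ | ⟨h1, h2⟩
          · rw [h1, h2]
          · rw [h1, h2]
            ring
        have hsum := Submodule.add_mem _ ih hedge
        have : (fun v => (if u = v then (1:ZMod 2) else 0) + (if b = v then 1 else 0))
              + (fun v => (if b = v then (1:ZMod 2) else 0) + (if c = v then 1 else 0))
            = fun v => (if u = v then (1:ZMod 2) else 0) + (if c = v then 1 else 0) := by
          funext v
          simp only [Pi.add_apply]
          have : ∀ a b c : ZMod 2, (a + b) + (b + c) = a + c := by decide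
          exact this _ _ _
        rwa [this] at hsum
    have hdecomp : g = ∑ u : G.V, g u •
        (fun v => (if u = v then (1:ZMod 2) else 0) + (if v₀ = v then 1 else 0)) := by
      funext v
      rw [Finset.sum_apply]
      have : ∀ u : G.V, (g u • (fun v => (if u = v then (1:ZMod 2) else 0)
          + (if v₀ = v then 1 else 0))) v
          = (if u = v then g u else 0) + g u * (if v₀ = v then 1 else 0) := by
        intro u
        show g u * ((if u = v then (1:ZMod 2) else 0) + (if v₀ = v then 1 else 0)) = _
        by_cases h1 : u = v <;> by_cases h2 : v₀ = v <;> simp [h1, h2] <;> ring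
      rw [Finset.sum_congr rfl fun u _ => this u, Finset.sum_add_distrib,
        Finset.sum_ite_eq' Finset.univ v g, ← Finset.sum_mul]
      have hg' : ∑ u : G.V, g u = 0 := hg
      rw [hg', zero_mul, add_zero, if_pos (Finset.mem_univ v)]
    rw [hdecomp]
    exact Submodule.sum_mem _ fun u _ => Submodule.smul_mem _ _ (claim1 u v₀ (hconn.2 u v₀))

lemma sumF_surjective (hconn : G.Connected) : Function.Surjective G.sumF := by
  intro c
  obtain ⟨v₀⟩ := hconn.1
  refine ⟨fun v => if v = v₀ then c else 0, ?_⟩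
  show (∑ v : G.V, if v = v₀ then c else 0) = c
  rw [Finset.sum_ite_eq' Finset.univ v₀ (fun _ => c), if_pos (Finset.mem_univ v₀)]

lemma finrank_ker_bmap (hconn : G.Connected) :
    Module.finrank (ZMod 2) (LinearMap.ker G.bmap)
      = Fintype.card G.E + 1 - Fintype.card G.V := by
  have hrn1 := LinearMap.finrank_range_add_finrank_ker G.bmap
  have hrn2 := LinearMap.finrank_range_add_finrank_ker G.sumF
  rw [Module.finrank_pi] at hrn1 hrn2
  have hr2 : LinearMap.range G.sumF = ⊤ := LinearMap.range_eq_top.2 (G.sumF_surjective hconn)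
  rw [hr2, finrank_top, Module.finrank_self] at hrn2
  rw [G.range_bmap hconn] at hrn1
  omega

lemma card_cyclic (hconn : G.Connected) :
    Nat.card {P : Finset G.E // G.IsCyclicSubgraph P}
      = 2 ^ (Fintype.card G.E + 1 - Fintype.card G.V) := by
  rw [Nat.card_congr (G.cyclicEquiv)]
  rw [Nat.card_eq_fintype_card]
  have b := Module.finBasis (ZMod 2) (LinearMap.ker G.bmap)
  rw [Module.card_fintype b, ZMod.card 2, Fintype.card_fin, G.finrank_ker_bmap hconn]

end Counting

end WGraph
namespace WGraph

attribute [local instance] Classical.propDecidable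

variable (G : WGraph)

lemma sigma_eq_helper (S T : Finset G.E) (h : S = T) (D : (G.subdiv S).V → ℤ)
    (D' : (G.subdiv T).V → ℤ) (h1 : ∀ v : G.V, D (.inl v) = D' (.inl v))
    (h2 : ∀ x, D (.inr x) = -1) (h2' : ∀ x, D' (.inr x) = -1) :
    (⟨S, D⟩ : Σ S : Finset G.E, ((G.subdiv S).V → ℤ)) = ⟨T, D'⟩ := by
  subst h
  have hDD : D = D' := by
    funext x
    match x with
    | .inl v => exact h1 v
    | .inr x => rw [h2 x, h2' x]
  rw [hDD]

end WGraph

attribute [local instance] Classical.propDecidable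

/-- On a connected weighted graph `Γ`, for every cyclic
subgraph `P` the pair `(E_P, D_P)` (with `E_P = Pᶜ`) is a polystable
pseudo-root; conversely every polystable pseudo-root is of this form for a
unique cyclic subgraph `P`. In particular there are exactly
`2^{b₁(Γ)} = 2^{#E - #V + 1}` polystable pseudo-roots. -/
theorem stmt6 (G : WGraph) (hconn : G.Connected) :
    (∀ P : Finset G.E, G.IsCyclicSubgraph P →
        G.IsPseudoRoot Pᶜ (G.DP P) ∧ G.IsPolystable Pᶜ (G.DP P)) ∧
    (∀ (S : Finset G.E) (D : (G.subdiv S).V → ℤ),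
        G.IsPseudoRoot S D → G.IsPolystable S D →
          ∃! P : Finset G.E, G.IsCyclicSubgraph P ∧
            (⟨S, D⟩ : Σ S : Finset G.E, ((G.subdiv S).V → ℤ)) = ⟨Pᶜ, G.DP P⟩) ∧
    Nat.card {p : Σ S : Finset G.E, ((G.subdiv S).V → ℤ) //
        G.IsPseudoRoot p.1 p.2 ∧ G.IsPolystable p.1 p.2} =
      2 ^ (Fintype.card G.E + 1 - Fintype.card G.V) := by
  have hmain : ∀ (S : Finset G.E) (D : (G.subdiv S).V → ℤ),
      G.IsPseudoRoot S D → G.IsPolystable S D →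
        G.IsCyclicSubgraph Sᶜ ∧
          (⟨S, D⟩ : Σ S : Finset G.E, ((G.subdiv S).V → ℤ)) = ⟨Sᶜᶜ, G.DP Sᶜ⟩ := by
    intro S D hroot hps
    obtain ⟨hcyc, hval⟩ := G.root_structure S D hroot hps
    refine ⟨hcyc, ?_⟩
    refine G.sigma_eq_helper S Sᶜᶜ (compl_compl S).symm D (G.DP Sᶜ) ?_ ?_ ?_
    · intro v
      rw [hval v, G.DP_inl Sᶜ v]
    · exact hroot.1
    · exact fun x => G.DP_inr Sᶜ x
  refine ⟨fun P hP => G.part1 P hP, ?_, ?_⟩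
  · intro S D hroot hps
    obtain ⟨hcyc, heq⟩ := hmain S D hroot hps
    refine ⟨Sᶜ, ⟨hcyc, heq⟩, ?_⟩
    rintro Q ⟨hQcyc, hQeq⟩
    have h1 : S = Qᶜ := congrArg Sigma.fst hQeq
    rw [h1, compl_compl]
  · set A := {p : Σ S : Finset G.E, ((G.subdiv S).V → ℤ) //
        G.IsPseudoRoot p.1 p.2 ∧ G.IsPolystable p.1 p.2}
    set B := {P : Finset G.E // G.IsCyclicSubgraph P}
    have hF : Function.Bijective (fun P : B =>
        (⟨⟨P.1ᶜ, G.DP P.1⟩, G.part1 P.1 P.2⟩ : A)) := by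
      constructor
      · intro P Q hPQ
        apply Subtype.ext
        have h1 : P.1ᶜ = Q.1ᶜ := congrArg (fun a : A => a.1.1) hPQ
        have : P.1 = Q.1 := by
          rw [← compl_compl P.1, h1, compl_compl]
        exact this
      · rintro ⟨⟨S, D⟩, hroot, hps⟩
        obtain ⟨hcyc, heq⟩ := hmain S D hroot hps
        refine ⟨⟨Sᶜ, hcyc⟩, ?_⟩
        apply Subtype.ext
        exact heq.symm
    rw [← Nat.card_eq_of_bijective _ hF]
    exact G.card_cyclic hconn
end
end
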